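/- arXiv:1702.05420 — 7 statements merged into one kernel-verified Lean document; each statement's English description precedes it below -/
import Mathlib

section
/- Fix a robot index i with a finite neighbor set N. For each j ∈ N let a_{ij} ≥ 0, b_{ij} ∈ ℝ, and let r^q_{ij}, r^ξ_{ij} : ℝ → ℝ² be given signals. Suppose q_i, ξ_i : ℝ → ℝ² are differentiable and satisfy the cooperative dynamics with zero human input: ξ̇_i(t) = Σ_{j∈N} b_{ij}(r^q_{ij}(t) − q_i(t)) and q̇_i(t) = Σ_{j∈N} a_{ij}(r^q_{ij}(t) − q_i(t)) − Σ_{j∈N} b_{ij}(r^ξ_{ij}(t) − ξ_i(t)). Define the storage function S_i(t) = ½‖q_i(t)‖² + ½‖ξ_i(t)‖², and for each j ∈ N the signals r_{ij}(t) = (r^q_{ij}(t), r^ξ_{ij}(t)) ∈ ℝ²×ℝ² and p_{ij}(t) = M_{ij}(r_{ij}(t) − (q_i(t), ξ_i(t))), where M_{ij}(x₁,x₂) = (a_{ij}x₁ − b_{ij}x₂, b_{ij}x₁). Then for every t, the derivative of S_i satisfies S_i'(t) = −Σ_{j∈N} a_{ij}‖q_i(t) − r^q_{ij}(t)‖² +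 Σ_{j∈N} ⟨r_{ij}(t), p_{ij}(t)⟩, and hence S_i'(t) ≤ Σ_{j∈N} ⟨r_{ij}(t), p_{ij}(t)⟩; i.e., the robot dynamics is passive from the received signals r_{ij} to the variables p_{ij}. -/
open RealInnerProductSpace

lemma key2 {E : Type*} [NormedAddCommGroup E] [InnerProductSpace ℝ E]
    (a b : ℝ) (q ξ rq rξ : E) :
    ⟪q, a • (rq - q) - b • (rξ - ξ)⟫ + ⟪ξ, b • (rq - q)⟫
      = -(a * ‖q - rq‖ ^ 2)
        + (⟪rq, a • (rq - q) - b • (rξ - ξ)⟫ + ⟪rξ, b • (rq - q)⟫) := by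
  simp only [inner_sub_left, inner_sub_right, real_inner_smul_right,
    norm_sub_sq_real, real_inner_self_eq_norm_sq]
  linear_combination (-a) * real_inner_comm rq q
    - b * (real_inner_comm rξ q + real_inner_comm q ξ + real_inner_comm ξ rq
      + real_inner_comm rq rξ)

/-- Passivity of a single robot's dynamics (zero human input):
with `ξ̇ᵢ = Σⱼ bᵢⱼ(r^q_{ij} − qᵢ)` and `q̇ᵢ = Σⱼ aᵢⱼ(r^q_{ij} − qᵢ) − Σⱼ bᵢⱼ(r^ξ_{ij} − ξᵢ)`,
the storage `Sᵢ = ½‖qᵢ‖² + ½‖ξᵢ‖²` satisfies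
`Sᵢ' = −Σⱼ aᵢⱼ‖qᵢ − r^q_{ij}‖² + Σⱼ ⟨r_{ij}, p_{ij}⟩ ≤ Σⱼ ⟨r_{ij}, p_{ij}⟩`,
where `p_{ij} = M_{ij}(r_{ij} − (qᵢ, ξᵢ))`, `M_{ij}(x₁,x₂) = (aᵢⱼx₁ − bᵢⱼx₂, bᵢⱼx₁)`,
and the product inner product is taken componentwise. -/
theorem stmt_2 {ι : Type*} (N : Finset ι) (a b : ι → ℝ)
    (ha : ∀ j ∈ N, 0 ≤ a j)
    (rq rξ : ι → ℝ → EuclideanSpace ℝ (Fin 2))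
    (qi ξi : ℝ → EuclideanSpace ℝ (Fin 2))
    (hξ : ∀ t, HasDerivAt ξi (∑ j ∈ N, b j • (rq j t - qi t)) t)
    (hq : ∀ t, HasDerivAt qi
      (∑ j ∈ N, a j • (rq j t - qi t) - ∑ j ∈ N, b j • (rξ j t - ξi t)) t)
    (M : ι → EuclideanSpace ℝ (Fin 2) × EuclideanSpace ℝ (Fin 2) →
         EuclideanSpace ℝ (Fin 2) × EuclideanSpace ℝ (Fin 2))
    (hM : ∀ j (x : EuclideanSpace ℝ (Fin 2) × EuclideanSpace ℝ (Fin 2)),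
      M j x = (a j • x.1 - b j • x.2, b j • x.1))
    (p : ι → ℝ → EuclideanSpace ℝ (Fin 2) × EuclideanSpace ℝ (Fin 2))
    (hp : ∀ j t, p j t = M j ((rq j t, rξ j t) - (qi t, ξi t)))
    (S : ℝ → ℝ)
    (hS : ∀ t, S t = 1 / 2 * ‖qi t‖ ^ 2 + 1 / 2 * ‖ξi t‖ ^ 2) :
    ∀ t, HasDerivAt S
        (-∑ j ∈ N, a j * ‖qi t - rq j t‖ ^ 2
          + ∑ j ∈ N, (⟪rq j t, (p j t).1⟫ + ⟪rξ j t, (p j t).2⟫)) t ∧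
      -∑ j ∈ N, a j * ‖qi t - rq j t‖ ^ 2
          + ∑ j ∈ N, (⟪rq j t, (p j t).1⟫ + ⟪rξ j t, (p j t).2⟫)
        ≤ ∑ j ∈ N, (⟪rq j t, (p j t).1⟫ + ⟪rξ j t, (p j t).2⟫) := by
  intro t
  have hpf : ∀ j, (p j t).1 = a j • (rq j t - qi t) - b j • (rξ j t - ξi t) := by
    intro j; simp [hp, hM]
  have hps : ∀ j, (p j t).2 = b j • (rq j t - qi t) := by
    intro j; simp [hp, hM]
  -- the key algebraic identity
  have hval :
      -∑ j ∈ N, a j * ‖qi t - rq j t‖ ^ 2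
          + ∑ j ∈ N, (⟪rq j t, (p j t).1⟫ + ⟪rξ j t, (p j t).2⟫)
        = ⟪qi t, ∑ j ∈ N, a j • (rq j t - qi t) - ∑ j ∈ N, b j • (rξ j t - ξi t)⟫
          + ⟪ξi t, ∑ j ∈ N, b j • (rq j t - qi t)⟫ := by
    rw [inner_sub_right, inner_sum, inner_sum, inner_sum,
      ← Finset.sum_sub_distrib, ← Finset.sum_add_distrib,
      ← Finset.sum_neg_distrib, ← Finset.sum_add_distrib]
    refine Finset.sum_congr rfl fun j _ => ?_
    rw [hpf, hps, ← inner_sub_right]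
    exact (key2 (a j) (b j) (qi t) (ξi t) (rq j t) (rξ j t)).symm
  constructor
  · have h1 := ((hq t).inner ℝ (hq t)).const_mul ((1:ℝ)/2)
    have h2 := ((hξ t).inner ℝ (hξ t)).const_mul ((1:ℝ)/2)
    have h3 := h1.add h2
    have hfun : S = fun t => 1/2 * ⟪qi t, qi t⟫ + 1/2 * ⟪ξi t, ξi t⟫ := by
      funext s
      rw [hS, real_inner_self_eq_norm_sq, real_inner_self_eq_norm_sq]
    rw [hfun, hval]
    convert h3 using 1
    case e'_4 => rfl
    case e'_5 => rfl
    case e'_8 => rfl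
    rw [real_inner_comm _ (qi t), real_inner_comm _ (ξi t)]
    ring
  · have hnonneg : 0 ≤ ∑ j ∈ N, a j * ‖qi t - rq j t‖ ^ 2 :=
      Finset.sum_nonneg fun j hj => mul_nonneg (ha j hj) (by positivity)
    linarith
end

section
/- Consider n robots indexed by i ∈ Fin n with differentiable positions q_i : ℝ → ℝ² and controller states ξ_i : ℝ → ℝ². Let a, b : Fin n → Fin n → ℝ be symmetric weights (a_{ij} = a_{ji}, b_{ij} = b_{ji}) with a_{ij} ≥ 0 for all i, j. Let V_h ⊆ Fin n be a nonempty subset with m = |V_h| elements, let δ_i = 1 if i ∈ V_h and 0 otherwise, let u_h : ℝ → ℝ² be a given input, and let q_r ∈ ℝ² be a constant. Suppose the delay-free dynamics hold: ξ̇_i(t) = Σ_j b_{ij}(q_j(t) − q_i(t)) and q̇_i(t) = Σ_j a_{ij}(q_j(t) − q_i(t)) − Σ_j b_{ij}(ξ_j(t) − ξ_i(t)) + δ_i u_h(t). Define S(t) = (1/(2m)) Σ_i (‖q_i(t) − q_r‖² + ‖ξ_i(t)‖²) and z̄(t) = (1/m) Σ_{i∈V_h} q_i(t) − q_r. Then S'(t)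 = −(1/(2m)) Σ_i Σ_j a_{ij} ‖q_i(t) − q_j(t)‖² + ⟨z̄(t), u_h(t)⟩, and hence S'(t) ≤ ⟨z̄(t), u_h(t)⟩; i.e., the delay-free robotic network is passive from the human input u_h to the (shifted) average position z̄ of the accessible robots. -/
open RealInnerProductSpace

lemma normsq_deriv {f : ℝ → EuclideanSpace ℝ (Fin 2)} {f' : EuclideanSpace ℝ (Fin 2)} {t : ℝ}
    (hf : HasDerivAt f f' t) :
    HasDerivAt (fun s => ‖f s‖ ^ 2) (2 * ⟪f t, f'⟫) t := by
  have h := hf.inner ℝ hf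
  have he : (fun s => ⟪f s, f s⟫) = fun s => ‖f s‖ ^ 2 := by
    funext s; rw [real_inner_self_eq_norm_sq]
  rw [he] at h
  rw [real_inner_comm (f t) f', ← two_mul] at h
  exact h

lemma pt_a (x y r : EuclideanSpace ℝ (Fin 2)) :
    ⟪x - r, y - x⟫ + ⟪y - r, x - y⟫ = -‖x - y‖ ^ 2 := by
  rw [show ‖x - y‖ ^ 2 = ⟪x - y, x - y⟫ from (real_inner_self_eq_norm_sq _).symm]
  simp only [inner_sub_left, inner_sub_right]
  rw [real_inner_comm y x]
  ring

lemma pt_b (x y r u v : EuclideanSpace ℝ (Fin 2)) :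
    ⟪x - r, u - v⟫ + ⟪y - r, v - u⟫ = ⟪x - y, u - v⟫ := by
  simp only [inner_sub_left, inner_sub_right]; ring

lemma pt_c (u v x y : EuclideanSpace ℝ (Fin 2)) :
    ⟪u, y - x⟫ + ⟪v, x - y⟫ = ⟪x - y, v - u⟫ := by
  simp only [inner_sub_left, inner_sub_right]
  rw [real_inner_comm x v, real_inner_comm y v, real_inner_comm x u, real_inner_comm y u]; ring

/-- Passivity of the delay-free robotic network: under the dynamics
`ξ̇ᵢ = Σⱼ bᵢⱼ(qⱼ − qᵢ)`, `q̇ᵢ = Σⱼ aᵢⱼ(qⱼ − qᵢ) − Σⱼ bᵢⱼ(ξⱼ − ξᵢ) + δᵢ u_h`, with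
symmetric gains (`aᵢⱼ ≥ 0`), the storage `S = (1/(2m)) Σᵢ (‖qᵢ − q_r‖² + ‖ξᵢ‖²)`
satisfies `S' = −(1/(2m)) Σᵢ Σⱼ aᵢⱼ‖qᵢ − qⱼ‖² + ⟨z̄, u_h⟩ ≤ ⟨z̄, u_h⟩`,
where `z̄ = (1/m) Σ_{i ∈ V_h} qᵢ − q_r`. -/
theorem stmt_3 {n : ℕ} (a b : Fin n → Fin n → ℝ)
    (hsym_a : ∀ i j, a i j = a j i) (hsym_b : ∀ i j, b i j = b j i)
    (ha : ∀ i j, 0 ≤ a i j)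
    (Vh : Finset (Fin n)) (hVh : Vh.Nonempty) (m : ℕ) (hm : m = Vh.card)
    (δ : Fin n → ℝ) (hδ : ∀ i, δ i = if i ∈ Vh then 1 else 0)
    (uh : ℝ → EuclideanSpace ℝ (Fin 2)) (qr : EuclideanSpace ℝ (Fin 2))
    (q ξ : Fin n → ℝ → EuclideanSpace ℝ (Fin 2))
    (hξ : ∀ i t, HasDerivAt (ξ i) (∑ j, b i j • (q j t - q i t)) t)
    (hq : ∀ i t, HasDerivAt (q i)
      (∑ j, a i j • (q j t - q i t) - ∑ j, b i j • (ξ j t - ξ i t) + δ i • uh t) t)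
    (S : ℝ → ℝ)
    (hS : ∀ t, S t = (1 / (2 * (m : ℝ))) * ∑ i, (‖q i t - qr‖ ^ 2 + ‖ξ i t‖ ^ 2))
    (zbar : ℝ → EuclideanSpace ℝ (Fin 2))
    (hz : ∀ t, zbar t = (1 / (m : ℝ)) • ∑ i ∈ Vh, q i t - qr) :
    ∀ t, HasDerivAt S
        (-(1 / (2 * (m : ℝ))) * ∑ i, ∑ j, a i j * ‖q i t - q j t‖ ^ 2
          + ⟪zbar t, uh t⟫) t ∧
      -(1 / (2 * (m : ℝ))) * ∑ i, ∑ j, a i j * ‖q i t - q j t‖ ^ 2 + ⟪zbar t, uh t⟫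
        ≤ ⟪zbar t, uh t⟫ := by
  intro t
  have hm0 : (m : ℝ) ≠ 0 := by
    have : 0 < Vh.card := Finset.card_pos.mpr hVh
    rw [hm]; exact_mod_cast this.ne'
  constructor
  · -- derivative
    have hfun : S = fun s => (1 / (2 * (m : ℝ))) * ∑ i, (‖q i s - qr‖ ^ 2 + ‖ξ i s‖ ^ 2) :=
      funext hS
    have hderiv : HasDerivAt S ((1 / (2 * (m : ℝ))) * ∑ i,
        (2 * ⟪q i t - qr, ∑ j, a i j • (q j t - q i t) - ∑ j, b i j • (ξ j t - ξ i t)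
            + δ i • uh t⟫
          + 2 * ⟪ξ i t, ∑ j, b i j • (q j t - q i t)⟫)) t := by
      rw [hfun]
      exact (HasDerivAt.fun_sum (fun i _ =>
        (normsq_deriv ((hq i t).sub_const qr)).add (normsq_deriv (hξ i t)))).const_mul _
    convert hderiv using 1
    -- algebraic identity
    have hsplit : ∀ i, 2 * ⟪q i t - qr, ∑ j, a i j • (q j t - q i t)
          - ∑ j, b i j • (ξ j t - ξ i t) + δ i • uh t⟫
          + 2 * ⟪ξ i t, ∑ j, b i j • (q j t - q i t)⟫
        = 2 * (∑ j, a i j * ⟪q i t - qr, q j t - q i t⟫)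
          - 2 * (∑ j, b i j * ⟪q i t - qr, ξ j t - ξ i t⟫)
          + 2 * (∑ j, b i j * ⟪ξ i t, q j t - q i t⟫)
          + 2 * (δ i * ⟪q i t - qr, uh t⟫) := by
      intro i
      simp only [inner_add_right, inner_sub_right, inner_sum, real_inner_smul_right]
      ring
    have hsum : ∑ i, (2 * ⟪q i t - qr, ∑ j, a i j • (q j t - q i t)
          - ∑ j, b i j • (ξ j t - ξ i t) + δ i • uh t⟫
          + 2 * ⟪ξ i t, ∑ j, b i j • (q j t - q i t)⟫)
        = 2 * (∑ i, ∑ j, a i j * ⟪q i t - qr, q j t - q i t⟫)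
          - 2 * (∑ i, ∑ j, b i j * ⟪q i t - qr, ξ j t - ξ i t⟫)
          + 2 * (∑ i, ∑ j, b i j * ⟪ξ i t, q j t - q i t⟫)
          + 2 * (∑ i, δ i * ⟪q i t - qr, uh t⟫) := by
      rw [Finset.sum_congr rfl (fun i _ => hsplit i)]
      rw [Finset.sum_add_distrib, Finset.sum_add_distrib, Finset.sum_sub_distrib,
        ← Finset.mul_sum, ← Finset.mul_sum, ← Finset.mul_sum, ← Finset.mul_sum]
    -- I1
    have I1 : 2 * (∑ i, ∑ j, a i j * ⟪q i t - qr, q j t - q i t⟫)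
        = - ∑ i, ∑ j, a i j * ‖q i t - q j t‖ ^ 2 := by
      have swap : ∑ i, ∑ j, a i j * ⟪q i t - qr, q j t - q i t⟫
          = ∑ i, ∑ j, a i j * ⟪q j t - qr, q i t - q j t⟫ := by
        rw [Finset.sum_comm]
        exact Finset.sum_congr rfl fun i _ => Finset.sum_congr rfl fun j _ => by rw [hsym_a]
      calc 2 * (∑ i, ∑ j, a i j * ⟪q i t - qr, q j t - q i t⟫)
          = (∑ i, ∑ j, a i j * ⟪q i t - qr, q j t - q i t⟫)
            + ∑ i, ∑ j, a i j * ⟪q j t - qr, q i t - q j t⟫ := by rw [← swap]; ring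
        _ = ∑ i, ∑ j, a i j * (⟪q i t - qr, q j t - q i t⟫ + ⟪q j t - qr, q i t - q j t⟫) := by
            rw [← Finset.sum_add_distrib]
            exact Finset.sum_congr rfl fun i _ => by
              rw [← Finset.sum_add_distrib]
              exact Finset.sum_congr rfl fun j _ => by ring
        _ = - ∑ i, ∑ j, a i j * ‖q i t - q j t‖ ^ 2 := by
            rw [← Finset.sum_neg_distrib]
            exact Finset.sum_congr rfl fun i _ => by
              rw [← Finset.sum_neg_distrib]
              exact Finset.sum_congr rfl fun j _ => by
                linear_combination a i j * pt_a (q i t) (q j t) qr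
    -- I2
    have I2 : (∑ i, ∑ j, b i j * ⟪q i t - qr, ξ j t - ξ i t⟫)
        = ∑ i, ∑ j, b i j * ⟪ξ i t, q j t - q i t⟫ := by
      have h1 : 2 * (∑ i, ∑ j, b i j * ⟪q i t - qr, ξ j t - ξ i t⟫)
          = ∑ i, ∑ j, b i j * ⟪q i t - q j t, ξ j t - ξ i t⟫ := by
        have swap : ∑ i, ∑ j, b i j * ⟪q i t - qr, ξ j t - ξ i t⟫
            = ∑ i, ∑ j, b i j * ⟪q j t - qr, ξ i t - ξ j t⟫ := by
          rw [Finset.sum_comm]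
          exact Finset.sum_congr rfl fun i _ => Finset.sum_congr rfl fun j _ => by rw [hsym_b]
        calc 2 * (∑ i, ∑ j, b i j * ⟪q i t - qr, ξ j t - ξ i t⟫)
            = (∑ i, ∑ j, b i j * ⟪q i t - qr, ξ j t - ξ i t⟫)
              + ∑ i, ∑ j, b i j * ⟪q j t - qr, ξ i t - ξ j t⟫ := by rw [← swap]; ring
          _ = ∑ i, ∑ j, b i j * ⟪q i t - q j t, ξ j t - ξ i t⟫ := by
              rw [← Finset.sum_add_distrib]
              refine Finset.sum_congr rfl fun i _ => ?_
              rw [← Finset.sum_add_distrib]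
              refine Finset.sum_congr rfl fun j _ => ?_
              linear_combination b i j * pt_b (q i t) (q j t) qr (ξ j t) (ξ i t)
      have h2 : 2 * (∑ i, ∑ j, b i j * ⟪ξ i t, q j t - q i t⟫)
          = ∑ i, ∑ j, b i j * ⟪q i t - q j t, ξ j t - ξ i t⟫ := by
        have swap : ∑ i, ∑ j, b i j * ⟪ξ i t, q j t - q i t⟫
            = ∑ i, ∑ j, b i j * ⟪ξ j t, q i t - q j t⟫ := by
          rw [Finset.sum_comm]
          exact Finset.sum_congr rfl fun i _ => Finset.sum_congr rfl fun j _ => by rw [hsym_b]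
        calc 2 * (∑ i, ∑ j, b i j * ⟪ξ i t, q j t - q i t⟫)
            = (∑ i, ∑ j, b i j * ⟪ξ i t, q j t - q i t⟫)
              + ∑ i, ∑ j, b i j * ⟪ξ j t, q i t - q j t⟫ := by rw [← swap]; ring
          _ = ∑ i, ∑ j, b i j * ⟪q i t - q j t, ξ j t - ξ i t⟫ := by
              rw [← Finset.sum_add_distrib]
              refine Finset.sum_congr rfl fun i _ => ?_
              rw [← Finset.sum_add_distrib]
              refine Finset.sum_congr rfl fun j _ => ?_
              linear_combination b i j * pt_c (ξ i t) (ξ j t) (q i t) (q j t)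
      linarith
    -- I3
    have I3 : (∑ i, δ i * ⟪q i t - qr, uh t⟫) = (m : ℝ) * ⟪zbar t, uh t⟫ := by
      have hL : (∑ i, δ i * ⟪q i t - qr, uh t⟫) = ∑ i ∈ Vh, ⟪q i t - qr, uh t⟫ := by
        simp only [hδ, ite_mul, one_mul, zero_mul]
        rw [Finset.sum_ite_mem, Finset.univ_inter]
      rw [hL, hz]
      rw [inner_sub_left, real_inner_smul_left, sum_inner]
      simp only [inner_sub_left, Finset.sum_sub_distrib, Finset.sum_const, nsmul_eq_mul]
      rw [← hm]
      field_simp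
    have hA : (∑ i, ∑ j, a i j * ⟪q i t - qr, q j t - q i t⟫)
        = -(∑ i, ∑ j, a i j * ‖q i t - q j t‖ ^ 2) / 2 := by linarith [I1]
    rw [hsum, I2, I3, hA]
    field_simp
    ring
  · have hnn : 0 ≤ ∑ i, ∑ j, a i j * ‖q i t - q j t‖ ^ 2 :=
      Finset.sum_nonneg fun i _ => Finset.sum_nonneg fun j _ =>
        mul_nonneg (ha i j) (sq_nonneg _)
    have hc : 0 ≤ 1 / (2 * (m : ℝ)) := by positivity
    have := mul_nonneg hc hnn
    linarith
end

section
/- Let σ > 0 and T > 0. Let p_{ij}, p_{ji}, r̄_{ij}, r̄_{ji} : ℝ → ℝ⁴ be continuous functions, and define the scattering variables s⁺_{ij}(t) = (1/√(2σ))(−p_{ij}(t) + σ r̄_{ij}(t)), s⁻_{ij}(t) = (1/√(2σ))(−p_{ij}(t) − σ r̄_{ij}(t)), s⁺_{ji}(t) = (1/√(2σ))(p_{ji}(t) + σ r̄_{ji}(t)), s⁻_{ji}(t) = (1/√(2σ))(p_{ji}(t) − σ r̄_{ji}(t)). Assume the transmission relations s⁺_{ji}(t) = s⁺_{ij}(t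 − T) and s⁻_{ij}(t) = s⁻_{ji}(t − T) hold for all t. Define the channel storage S^c(t) = ½∫_{t−T}^{t} ‖s⁺_{ij}(τ)‖² dτ + ½∫_{t−T}^{t} ‖s⁻_{ji}(τ)‖² dτ. Then S^c is differentiable and (S^c)'(t) = −⟨p_{ij}(t), r̄_{ij}(t)⟩ − ⟨p_{ji}(t), r̄_{ji}(t)⟩ for all t; i.e., the delayed communication channel is passive from (−p_{ij}, −p_{ji}) to (r̄_{ij}, r̄_{ji}). -/
open RealInnerProductSpace

/-- Passivity of the delayed communication channel under the scattering
transformation: with scattering variables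
`s⁺ᵢⱼ = (1/√(2σ))(−pᵢⱼ + σr̄ᵢⱼ)`, `s⁻ᵢⱼ = (1/√(2σ))(−pᵢⱼ − σr̄ᵢⱼ)`,
`s⁺ⱼᵢ = (1/√(2σ))(pⱼᵢ + σr̄ⱼᵢ)`, `s⁻ⱼᵢ = (1/√(2σ))(pⱼᵢ − σr̄ⱼᵢ)` and transmission
`s⁺ⱼᵢ(t) = s⁺ᵢⱼ(t − T)`, `s⁻ᵢⱼ(t) = s⁻ⱼᵢ(t − T)`, the channel storage
`S^c(t) = ½∫_{t−T}^t ‖s⁺ᵢⱼ‖² + ½∫_{t−T}^t ‖s⁻ⱼᵢ‖²` is differentiable with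
`(S^c)'(t) = −⟨pᵢⱼ(t), r̄ᵢⱼ(t)⟩ − ⟨pⱼᵢ(t), r̄ⱼᵢ(t)⟩`. -/
theorem stmt_5 (σ T : ℝ) (hσ : 0 < σ) (hT : 0 < T)
    (pij pji rij rji : ℝ → EuclideanSpace ℝ (Fin 4))
    (hpij : Continuous pij) (hpji : Continuous pji)
    (hrij : Continuous rij) (hrji : Continuous rji)
    (spij smij spji smji : ℝ → EuclideanSpace ℝ (Fin 4))
    (hspij : ∀ t, spij t = (1 / Real.sqrt (2 * σ)) • (-pij t + σ • rij t))
    (hsmij : ∀ t, smij t = (1 / Real.sqrt (2 * σ)) • (-pij t - σ • rij t))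
    (hspji : ∀ t, spji t = (1 / Real.sqrt (2 * σ)) • (pji t + σ • rji t))
    (hsmji : ∀ t, smji t = (1 / Real.sqrt (2 * σ)) • (pji t - σ • rji t))
    (htransp : ∀ t, spji t = spij (t - T))
    (htransm : ∀ t, smij t = smji (t - T))
    (Sc : ℝ → ℝ)
    (hSc : ∀ t, Sc t = 1 / 2 * (∫ τ in (t - T)..t, ‖spij τ‖ ^ 2)
                     + 1 / 2 * (∫ τ in (t - T)..t, ‖smji τ‖ ^ 2)) :
    ∀ t, HasDerivAt Sc (-⟪pij t, rij t⟫ - ⟪pji t, rji t⟫) t := by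
  intro t
  have hcsp : Continuous spij := by
    have : spij = fun u => (1 / Real.sqrt (2 * σ)) • (-pij u + σ • rij u) := funext hspij
    rw [this]; fun_prop
  have hcsm : Continuous smji := by
    have : smji = fun u => (1 / Real.sqrt (2 * σ)) • (pji u - σ • rji u) := funext hsmji
    rw [this]; fun_prop
  set f : ℝ → ℝ := fun τ => ‖spij τ‖ ^ 2 with hfdef
  set g : ℝ → ℝ := fun τ => ‖smji τ‖ ^ 2 with hgdef
  have hfc : Continuous f := by fun_prop
  have hgc : Continuous g := by fun_prop
  have hrw : Sc = fun u => 1 / 2 * ((∫ τ in (0:ℝ)..u, f τ) - (∫ τ in (0:ℝ)..(u - T), f τ))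
      + 1 / 2 * ((∫ τ in (0:ℝ)..u, g τ) - (∫ τ in (0:ℝ)..(u - T), g τ)) := by
    funext u
    rw [hSc u,
      intervalIntegral.integral_interval_sub_left (hfc.intervalIntegrable _ _)
        (hfc.intervalIntegrable _ _),
      intervalIntegral.integral_interval_sub_left (hgc.intervalIntegrable _ _)
        (hgc.intervalIntegrable _ _)]
  have hF : ∀ s : ℝ, HasDerivAt (fun u => ∫ τ in (0:ℝ)..u, f τ) (f s) s := fun s =>
    intervalIntegral.integral_hasDerivAt_right (hfc.intervalIntegrable _ _)
      (hfc.stronglyMeasurableAtFilter _ _) hfc.continuousAt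
  have hG : ∀ s : ℝ, HasDerivAt (fun u => ∫ τ in (0:ℝ)..u, g τ) (g s) s := fun s =>
    intervalIntegral.integral_hasDerivAt_right (hgc.intervalIntegrable _ _)
      (hgc.stronglyMeasurableAtFilter _ _) hgc.continuousAt
  have hFT : HasDerivAt (fun u => ∫ τ in (0:ℝ)..(u - T), f τ) (f (t - T)) t := by
    have := (hF (t - T)).comp t ((hasDerivAt_id t).sub_const T)
    simpa [Function.comp_def] using this
  have hGT : HasDerivAt (fun u => ∫ τ in (0:ℝ)..(u - T), g τ) (g (t - T)) t := by
    have := (hG (t - T)).comp t ((hasDerivAt_id t).sub_const T)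
    simpa [Function.comp_def] using this
  have hderiv : HasDerivAt Sc (1 / 2 * (f t - f (t - T)) + 1 / 2 * (g t - g (t - T))) t := by
    rw [hrw]
    exact ((((hF t).sub hFT).const_mul (1/2)).add (((hG t).sub hGT).const_mul (1/2)))
  have hkey : 1 / 2 * (f t - f (t - T)) + 1 / 2 * (g t - g (t - T))
      = -⟪pij t, rij t⟫ - ⟪pji t, rji t⟫ := by
    simp only [hfdef, hgdef]
    rw [← htransp t, ← htransm t, hspij t, hspji t, hsmji t, hsmij t]
    have hs : Real.sqrt (2 * σ) > 0 := Real.sqrt_pos.2 (by linarith)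
    simp only [norm_smul, mul_pow, Real.norm_eq_abs, abs_div, abs_one, sq_abs, div_pow, one_pow,
      Real.sq_sqrt (by linarith : (0:ℝ) ≤ 2 * σ)]
    simp only [← real_inner_self_eq_norm_sq]
    simp only [inner_add_left, inner_add_right, inner_sub_left, inner_sub_right,
      inner_neg_left, inner_neg_right, real_inner_smul_left, real_inner_smul_right]
    rw [real_inner_comm (rij t) (pij t), real_inner_comm (rji t) (pji t)]
    field_simp
    ring
  rw [← hkey]
  exact hderiv
end

section
/- Fix a robot index i with finite neighbor set N, gains a_{ij} ≥ 0, b_{ij} ∈ ℝ for j ∈ N, a constant reference q_r ∈ ℝ², a scalar δ_i ∈ {0,1}, an input u_h : ℝ → ℝ², and received signals r^q_{ij}, r^ξ_{ij} : ℝ → ℝ². Suppose q_i, ξ_i : ℝ → ℝ² are differentiable and satisfy ξ̇_i(t) = Σ_{j∈N} b_{ij}(r^q_{ij}(t) − q_i(t)) and q̇_i(t) = Σ_{j∈N} a_{ij}(r^q_{ij}(t) − q_i(t)) − Σ_{j∈N} b_{ij}(r^ξ_{ij}(t) − ξ_i(t)) + δ_i u_h(t). Define q̄_i = q_i − q_r,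 r̄^q_{ij} = r^q_{ij} − q_r, r̄_{ij} = (r̄^q_{ij}, r^ξ_{ij}), p_{ij} = M_{ij}((r^q_{ij}, r^ξ_{ij}) − (q_i, ξ_i)) with M_{ij}(x₁,x₂) = (a_{ij}x₁ − b_{ij}x₂, b_{ij}x₁), and the error storage S̄_i(t) = ½‖q̄_i(t)‖² + ½‖ξ_i(t)‖². Then S̄_i'(t) = −Σ_{j∈N} a_{ij}‖q_i(t) − r^q_{ij}(t)‖² + Σ_{j∈N} ⟨r̄_{ij}(t), p_{ij}(t)⟩ + δ_i ⟨q̄_i(t), u_h(t)⟩ for all t. -/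
open RealInnerProductSpace

/-- Passivity of a single robot's error dynamics with human input:
with `ξ̇ᵢ = Σⱼ bᵢⱼ(r^q_{ij} − qᵢ)`,
`q̇ᵢ = Σⱼ aᵢⱼ(r^q_{ij} − qᵢ) − Σⱼ bᵢⱼ(r^ξ_{ij} − ξᵢ) + δᵢ u_h`, constant reference `q_r`,
error storage `S̄ᵢ = ½‖qᵢ − q_r‖² + ½‖ξᵢ‖²`, one has
`S̄ᵢ' = −Σⱼ aᵢⱼ‖qᵢ − r^q_{ij}‖² + Σⱼ ⟨r̄_{ij}, p_{ij}⟩ + δᵢ⟨q̄ᵢ, u_h⟩`,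
where `r̄_{ij} = (r^q_{ij} − q_r, r^ξ_{ij})`, `p_{ij} = M_{ij}((r^q_{ij},r^ξ_{ij}) − (qᵢ,ξᵢ))`
and `M_{ij}(x₁,x₂) = (aᵢⱼx₁ − bᵢⱼx₂, bᵢⱼx₁)`. -/
theorem stmt_6 {ι : Type*} (N : Finset ι) (a b : ι → ℝ)
    (ha : ∀ j ∈ N, 0 ≤ a j)
    (qr : EuclideanSpace ℝ (Fin 2)) (δ : ℝ) (hδ : δ = 0 ∨ δ = 1)
    (uh : ℝ → EuclideanSpace ℝ (Fin 2))
    (rq rξ : ι → ℝ → EuclideanSpace ℝ (Fin 2))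
    (qi ξi : ℝ → EuclideanSpace ℝ (Fin 2))
    (hξ : ∀ t, HasDerivAt ξi (∑ j ∈ N, b j • (rq j t - qi t)) t)
    (hq : ∀ t, HasDerivAt qi
      (∑ j ∈ N, a j • (rq j t - qi t) - ∑ j ∈ N, b j • (rξ j t - ξi t) + δ • uh t) t)
    (M : ι → EuclideanSpace ℝ (Fin 2) × EuclideanSpace ℝ (Fin 2) →
         EuclideanSpace ℝ (Fin 2) × EuclideanSpace ℝ (Fin 2))
    (hM : ∀ j (x : EuclideanSpace ℝ (Fin 2) × EuclideanSpace ℝ (Fin 2)),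
      M j x = (a j • x.1 - b j • x.2, b j • x.1))
    (p : ι → ℝ → EuclideanSpace ℝ (Fin 2) × EuclideanSpace ℝ (Fin 2))
    (hp : ∀ j t, p j t = M j ((rq j t, rξ j t) - (qi t, ξi t)))
    (Sbar : ℝ → ℝ)
    (hS : ∀ t, Sbar t = 1 / 2 * ‖qi t - qr‖ ^ 2 + 1 / 2 * ‖ξi t‖ ^ 2) :
    ∀ t, HasDerivAt Sbar
      (-∑ j ∈ N, a j * ‖qi t - rq j t‖ ^ 2
        + ∑ j ∈ N, (⟪rq j t - qr, (p j t).1⟫ + ⟪rξ j t, (p j t).2⟫)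
        + δ * ⟪qi t - qr, uh t⟫) t := by
  intro t
  have hq' := hq t
  have hξ' := hξ t
  have hqbar : HasDerivAt (fun t => qi t - qr)
      (∑ j ∈ N, a j • (rq j t - qi t) - ∑ j ∈ N, b j • (rξ j t - ξi t) + δ • uh t) t := by
    simpa using hq'.sub_const qr
  have h1 : HasDerivAt (fun t => (1 / 2 : ℝ) * ⟪qi t - qr, qi t - qr⟫ +
      (1 / 2 : ℝ) * ⟪ξi t, ξi t⟫)
      ((1 / 2 : ℝ) * (⟪qi t - qr, ∑ j ∈ N, a j • (rq j t - qi t) - ∑ j ∈ N, b j • (rξ j t - ξi t) + δ • uh t⟫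
        + ⟪∑ j ∈ N, a j • (rq j t - qi t) - ∑ j ∈ N, b j • (rξ j t - ξi t) + δ • uh t, qi t - qr⟫)
      + (1 / 2 : ℝ) * (⟪ξi t, ∑ j ∈ N, b j • (rq j t - qi t)⟫
        + ⟪∑ j ∈ N, b j • (rq j t - qi t), ξi t⟫)) t :=
    ((hqbar.inner (𝕜 := ℝ) hqbar).const_mul _).add ((hξ'.inner (𝕜 := ℝ) hξ').const_mul _)
  have hfun : Sbar = fun t => (1 / 2 : ℝ) * ⟪qi t - qr, qi t - qr⟫ +
      (1 / 2 : ℝ) * ⟪ξi t, ξi t⟫ := by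
    funext s
    rw [hS s, real_inner_self_eq_norm_sq, real_inner_self_eq_norm_sq]
  rw [hfun]
  convert h1 using 1
  have key : ∀ j ∈ N,
      (-(a j * ‖qi t - rq j t‖ ^ 2)
        + (⟪rq j t - qr, (p j t).1⟫ + ⟪rξ j t, (p j t).2⟫))
      = a j * ⟪qi t - qr, rq j t - qi t⟫ - b j * ⟪qi t - qr, rξ j t - ξi t⟫
        + b j * ⟪ξi t, rq j t - qi t⟫ := by
    intro j _
    rw [hp, hM]
    simp only [Prod.fst_sub, Prod.snd_sub]
    have e3 : ‖qi t - rq j t‖ ^ 2 = ⟪qi t - rq j t, qi t - rq j t⟫ :=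
      (real_inner_self_eq_norm_sq _).symm
    rw [e3]
    simp only [inner_sub_left, inner_sub_right, real_inner_smul_right]
    rw [real_inner_comm (rq j t) (qi t), real_inner_comm (rξ j t) (qi t),
      real_inner_comm (ξi t) (qi t), real_inner_comm (rξ j t) (rq j t),
      real_inner_comm (ξi t) (rq j t)]
    ring
  have hsum : -∑ j ∈ N, a j * ‖qi t - rq j t‖ ^ 2
        + ∑ j ∈ N, (⟪rq j t - qr, (p j t).1⟫ + ⟪rξ j t, (p j t).2⟫)
        + δ * ⟪qi t - qr, uh t⟫
      = ∑ j ∈ N, (a j * ⟪qi t - qr, rq j t - qi t⟫ - b j * ⟪qi t - qr, rξ j t - ξi t⟫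
          + b j * ⟪ξi t, rq j t - qi t⟫) + δ * ⟪qi t - qr, uh t⟫ := by
    rw [← Finset.sum_congr rfl key]
    simp only [Finset.sum_add_distrib, Finset.sum_neg_distrib]
  rw [hsum]
  simp only [inner_add_right, inner_sub_right, inner_add_left, inner_sub_left, inner_sum,
    sum_inner, real_inner_smul_right, real_inner_smul_left,
    Finset.sum_add_distrib, Finset.sum_sub_distrib, mul_sub]
  have hc1 : ∀ x, ⟪rq x t, qi t⟫ = ⟪qi t, rq x t⟫ := fun x => real_inner_comm _ _
  have hc2 : ∀ x, ⟪rq x t, qr⟫ = ⟪qr, rq x t⟫ := fun x => real_inner_comm _ _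
  have hc3 : ∀ x, ⟪rξ x t, qi t⟫ = ⟪qi t, rξ x t⟫ := fun x => real_inner_comm _ _
  have hc4 : ∀ x, ⟪rξ x t, qr⟫ = ⟪qr, rξ x t⟫ := fun x => real_inner_comm _ _
  have hc5 : ∀ x, ⟪rq x t, ξi t⟫ = ⟪ξi t, rq x t⟫ := fun x => real_inner_comm _ _
  have hc6 : ⟪ξi t, qi t⟫ = ⟪qi t, ξi t⟫ := real_inner_comm _ _
  have hc7 : ⟪qi t, qr⟫ = ⟪qr, qi t⟫ := real_inner_comm _ _
  have hc8 : ⟪ξi t, qr⟫ = ⟪qr, ξi t⟫ := real_inner_comm _ _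
  have hc9 : ⟪uh t, qi t⟫ = ⟪qi t, uh t⟫ := real_inner_comm _ _
  have hc10 : ⟪uh t, qr⟫ = ⟪qr, uh t⟫ := real_inner_comm _ _
  simp only [hc1, hc2, hc3, hc4, hc5, hc6, hc7, hc8, hc9, hc10]
  ring
end

section
/- Consider n robots on a finite undirected graph G on Fin n, with symmetric gains a_{ij} = a_{ji} ≥ 0 and b_{ij} = b_{ji}, constant delay T > 0, scattering parameter σ > 0, constant reference q_r ∈ ℝ², nonempty accessible set V_h ⊆ Fin n with m = |V_h| elements, δ_i the indicator of V_h, and continuous input u_h : ℝ → ℝ². For each ordered pair (i,j) with j a neighbor of i, let r^q_{ij}, r^ξ_{ij} : ℝ → ℝ² be continuous, set r_{ij} = (r^q_{ij}, r^ξ_{ij}), r̄_{ij} = (r^q_{ij} − q_r, r^ξ_{ij}), p_{ij} = M_{ij}(r_{ij} − (q_i, ξ_i)) with M_{ij}(x₁,x₂) = (a_{ij}x₁ − b_{ij}x₂, b_{ij}x₁), and suppose the scattering transmission relations hold for all t: (1/√(2σ))(p_{ji}(t) + σ r̄_{ji}(t)) = (1/√(2σ))(−p_{ij}(t−T) + σ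 r̄_{ij}(t−T)) and (1/√(2σ))(−p_{ij}(t) − σ r̄_{ij}(t)) = (1/√(2σ))(p_{ji}(t−T) − σ r̄_{ji}(t−T)). Suppose q_i, ξ_i : ℝ → ℝ² are differentiable and satisfy ξ̇_i = Σ_j b_{ij}(r^q_{ij} − q_i), q̇_i = Σ_j a_{ij}(r^q_{ij} − q_i) − Σ_j b_{ij}(r^ξ_{ij} − ξ_i) + δ_i u_h. Define the total storage S(t) = (1/m) Σ_i [½‖q_i(t)−q_r‖² + ½‖ξ_i(t)‖²] + (1/m) Σ_{edges (i,j)} [½∫_{t−T}^{t}‖(1/√(2σ))(−p_{ij}+σr̄_{ij})(τ)‖²dτ + ½∫_{t−T}^{t}‖(1/√(2σ))(p_{ji}−σr̄_{ji})(τ)‖²dτ], and z̄(t) = (1/m)Σ_{i∈V_h} q_i(t) − q_r. Then S is differentiable with S'(t) = −(1/m) Σ_i Σ_j a_{ij} ‖q_i(t) − r^q_{ij}(t)‖² + ⟨z̄(t), u_h(t)⟩ ≤ ⟨z̄(t), u_h(t)⟩; i.e., the delayed robotic network is passive from u_h to z̄. -/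
open RealInnerProductSpace

section AuxStmt7

open intervalIntegral MeasureTheory

/-- FTC for a sliding window integral. -/
lemma aux_window_deriv {f : ℝ → ℝ} (hf : Continuous f) (T t : ℝ) :
    HasDerivAt (fun u => ∫ τ in (u - T)..u, f τ) (f t - f (t - T)) t := by
  have hF : ∀ s : ℝ, HasDerivAt (fun u => ∫ τ in (0:ℝ)..u, f τ) (f s) s := fun s =>
    integral_hasDerivAt_right (hf.intervalIntegrable 0 s)
      (hf.stronglyMeasurable.stronglyMeasurableAtFilter) hf.continuousAt
  have h2 : HasDerivAt (fun u : ℝ => ∫ τ in (0:ℝ)..(u - T), f τ) (f (t - T)) t := by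
    have := (hF (t - T)).comp t ((hasDerivAt_id t).sub_const T)
    simpa [Function.comp_def] using this
  have heq : (fun u : ℝ => ∫ τ in (u - T)..u, f τ)
      = fun u => (∫ τ in (0:ℝ)..u, f τ) - ∫ τ in (0:ℝ)..(u - T), f τ := by
    funext u
    exact (integral_interval_sub_left (hf.intervalIntegrable 0 u)
      (hf.intervalIntegrable 0 (u - T))).symm
  rw [heq]
  exact (hF t).sub h2

/-- Sum over an orientation of the edge set equals the double sum, for functions
vanishing off edges. -/
lemma aux_edge_sum {n : ℕ} (G : SimpleGraph (Fin n)) (E : Finset (Fin n × Fin n))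
    (hE : ∀ i j, G.Adj i j ↔ ((i, j) ∈ E ∨ (j, i) ∈ E))
    (hE1 : ∀ e ∈ E, (e.2, e.1) ∉ E)
    (F : Fin n → Fin n → ℝ) (h0 : ∀ i j, ¬G.Adj i j → F i j = 0) :
    ∑ e ∈ E, (F e.1 e.2 + F e.2 e.1) = ∑ i, ∑ j, F i j := by
  classical
  have hswap : ∑ e ∈ E.image Prod.swap, F e.1 e.2 = ∑ e ∈ E, F e.2 e.1 := by
    rw [Finset.sum_image (by intro x _ y _ h; exact Prod.swap_injective h)]
    simp [Prod.swap]
  have hdisj : Disjoint E (E.image Prod.swap) := by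
    rw [Finset.disjoint_left]
    intro e he hmem
    obtain ⟨e', he', h⟩ := Finset.mem_image.mp hmem
    apply hE1 e' he'
    rw [← h] at he
    simpa [Prod.swap] using he
  have key : ∑ i, ∑ j, F i j = ∑ e ∈ E ∪ E.image Prod.swap, F e.1 e.2 := by
    rw [← Finset.sum_product']
    refine (Finset.sum_subset (Finset.subset_univ _) ?_).symm
    intro e _ he
    apply h0
    intro hadj
    rcases (hE e.1 e.2).mp hadj with h1 | h2
    · exact he (Finset.mem_union_left _ h1)
    · exact he (Finset.mem_union_right _ (Finset.mem_image.mpr ⟨(e.2, e.1), h2, rfl⟩))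
  rw [key, Finset.sum_union hdisj, hswap, Finset.sum_add_distrib]

variable {EE : Type*} [NormedAddCommGroup EE] [InnerProductSpace ℝ EE]

/-- The scattering norm identity. -/
lemma aux_scatter (σ : ℝ) (hσ : 0 < σ) (u v : EE) :
    1 / 2 * ‖(1 / Real.sqrt (2 * σ)) • (-u + σ • v)‖ ^ 2
      - 1 / 2 * ‖(1 / Real.sqrt (2 * σ)) • (u + σ • v)‖ ^ 2 = -⟪u, v⟫ := by
  have h2σ : (0:ℝ) < 2 * σ := by linarith
  have hc : (1 / Real.sqrt (2 * σ)) ^ 2 = 1 / (2 * σ) := by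
    rw [div_pow, one_pow, Real.sq_sqrt h2σ.le]
  have e1 : ‖-u + σ • v‖ ^ 2 = ‖u‖^2 - 2 * (σ * ⟪u, v⟫) + σ^2 * ‖v‖^2 := by
    rw [show -u + σ • v = σ • v - u by abel, @norm_sub_sq_real, real_inner_smul_left,
      norm_smul, real_inner_comm, mul_pow, Real.norm_eq_abs, sq_abs]
    try ring
  have e2 : ‖u + σ • v‖ ^ 2 = ‖u‖^2 + 2 * (σ * ⟪u, v⟫) + σ^2 * ‖v‖^2 := by
    rw [@norm_add_sq_real, real_inner_smul_right, norm_smul, mul_pow, Real.norm_eq_abs, sq_abs]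
    try ring
  rw [norm_smul, norm_smul, mul_pow, mul_pow, Real.norm_eq_abs, sq_abs, hc, e1, e2]
  field_simp
  ring

lemma aux_scatter' (σ : ℝ) (hσ : 0 < σ) (u v : EE) :
    1 / 2 * ‖(1 / Real.sqrt (2 * σ)) • (u - σ • v)‖ ^ 2
      - 1 / 2 * ‖(1 / Real.sqrt (2 * σ)) • (u + σ • v)‖ ^ 2 = -⟪u, v⟫ := by
  rw [show u - σ • v = -(-u + σ • v) by abel, smul_neg, norm_neg]
  exact aux_scatter σ hσ u v

lemma aux_negnorm (c σ : ℝ) (u v : EE) :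
    ‖c • (-u - σ • v)‖ = ‖c • (u + σ • v)‖ := by
  rw [show -u - σ • v = -(u + σ • v) by abel, smul_neg, norm_neg]

/-- Pointwise algebraic identity for the power balance along each directed pair. -/
lemma aux_pair (a b : ℝ) (x y w z : EE) :
    ⟪w, a • x⟫ - ⟪w, b • y⟫ + ⟪z, b • x⟫
      + -(⟪a • x - b • y, x + w⟫ + ⟪b • x, y + z⟫) = -(a * ‖x‖ ^ 2) := by
  simp only [inner_sub_left, inner_add_right, real_inner_smul_left, real_inner_smul_right]
  rw [← real_inner_self_eq_norm_sq]
  linear_combination a * real_inner_comm x w + b * real_inner_comm w y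
    + b * real_inner_comm x z + b * real_inner_comm x y

lemma aux_congr_deriv {f : ℝ → ℝ} {d d' : ℝ} {t : ℝ}
    (h : HasDerivAt f d t) (he : d = d') : HasDerivAt f d' t := he ▸ h

end AuxStmt7

/-- Passivity of the delayed robotic network from the human input `u_h` to
the shifted average position `z̄` of the accessible robots: with dynamics
`ξ̇ᵢ = Σⱼ bᵢⱼ(r^q_{ij} − qᵢ)`, `q̇ᵢ = Σⱼ aᵢⱼ(r^q_{ij} − qᵢ) − Σⱼ bᵢⱼ(r^ξ_{ij} − ξᵢ) + δᵢu_h`,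
scattering transmission relations along each edge with delay `T`, and total storage
`S = (1/m)Σᵢ[½‖qᵢ−q_r‖² + ½‖ξᵢ‖²] + (1/m)Σ_edges[channel storage]`, one has
`S' = −(1/m)ΣᵢΣⱼ aᵢⱼ‖qᵢ − r^q_{ij}‖² + ⟨z̄, u_h⟩ ≤ ⟨z̄, u_h⟩`.
The squared Euclidean norm on `ℝ²×ℝ²` is written componentwise as `‖·.1‖² + ‖·.2‖²`. -/
theorem stmt_7 {n : ℕ} (G : SimpleGraph (Fin n))
    (a b : Fin n → Fin n → ℝ)
    (hsym_a : ∀ i j, a i j = a j i) (hsym_b : ∀ i j, b i j = b j i)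
    (ha : ∀ i j, 0 ≤ a i j)
    (hadj : ∀ i j, G.Adj i j ↔ 0 < a i j)
    (hoff : ∀ i j, ¬G.Adj i j → a i j = 0 ∧ b i j = 0)
    (T σ : ℝ) (hT : 0 < T) (hσ : 0 < σ)
    (qr : EuclideanSpace ℝ (Fin 2))
    (Vh : Finset (Fin n)) (hVh : Vh.Nonempty) (m : ℕ) (hm : m = Vh.card)
    (δ : Fin n → ℝ) (hδ : ∀ i, δ i = if i ∈ Vh then 1 else 0)
    (uh : ℝ → EuclideanSpace ℝ (Fin 2)) (huh : Continuous uh)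
    (rq rξ : Fin n → Fin n → ℝ → EuclideanSpace ℝ (Fin 2))
    (hrq : ∀ i j, Continuous (rq i j)) (hrξ : ∀ i j, Continuous (rξ i j))
    (q ξ : Fin n → ℝ → EuclideanSpace ℝ (Fin 2))
    -- the delayed cooperative dynamics
    (hξdyn : ∀ i t, HasDerivAt (ξ i) (∑ j, b i j • (rq i j t - q i t)) t)
    (hqdyn : ∀ i t, HasDerivAt (q i)
      (∑ j, a i j • (rq i j t - q i t) - ∑ j, b i j • (rξ i j t - ξ i t) + δ i • uh t) t)
    -- `p_{ij} = M_{ij}(r_{ij} − (qᵢ, ξᵢ))` with `M_{ij}(x₁,x₂) = (aᵢⱼx₁ − bᵢⱼx₂, bᵢⱼx₁)`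
    (p : Fin n → Fin n → ℝ → EuclideanSpace ℝ (Fin 2) × EuclideanSpace ℝ (Fin 2))
    (hp : ∀ i j t, p i j t
      = (a i j • (rq i j t - q i t) - b i j • (rξ i j t - ξ i t),
         b i j • (rq i j t - q i t)))
    -- `r̄_{ij} = (r^q_{ij} − q_r, r^ξ_{ij})`
    (rbar : Fin n → Fin n → ℝ → EuclideanSpace ℝ (Fin 2) × EuclideanSpace ℝ (Fin 2))
    (hrbar : ∀ i j t, rbar i j t = (rq i j t - qr, rξ i j t))
    -- scattering transmission relations along each edge
    (htrans1 : ∀ i j, G.Adj i j → ∀ t : ℝ,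
      (1 / Real.sqrt (2 * σ)) • (p j i t + σ • rbar j i t)
        = (1 / Real.sqrt (2 * σ)) • (-p i j (t - T) + σ • rbar i j (t - T)))
    (htrans2 : ∀ i j, G.Adj i j → ∀ t : ℝ,
      (1 / Real.sqrt (2 * σ)) • (-p i j t - σ • rbar i j t)
        = (1 / Real.sqrt (2 * σ)) • (p j i (t - T) - σ • rbar j i (t - T)))
    -- an orientation of the edge set: each undirected edge of `G` appears exactly once
    (E : Finset (Fin n × Fin n))
    (hE : ∀ i j, G.Adj i j ↔ ((i, j) ∈ E ∨ (j, i) ∈ E))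
    (hE1 : ∀ e ∈ E, (e.2, e.1) ∉ E)
    -- the total storage function
    (S : ℝ → ℝ)
    (hS : ∀ t, S t
      = (1 / (m : ℝ)) * ∑ i, (1 / 2 * ‖q i t - qr‖ ^ 2 + 1 / 2 * ‖ξ i t‖ ^ 2)
        + (1 / (m : ℝ)) * ∑ e ∈ E,
            (1 / 2 * (∫ τ in (t - T)..t,
                (‖((1 / Real.sqrt (2 * σ)) • (-p e.1 e.2 τ + σ • rbar e.1 e.2 τ)).1‖ ^ 2
                  + ‖((1 / Real.sqrt (2 * σ)) • (-p e.1 e.2 τ + σ • rbar e.1 e.2 τ)).2‖ ^ 2))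
              + 1 / 2 * (∫ τ in (t - T)..t,
                (‖((1 / Real.sqrt (2 * σ)) • (p e.2 e.1 τ - σ • rbar e.2 e.1 τ)).1‖ ^ 2
                  + ‖((1 / Real.sqrt (2 * σ)) • (p e.2 e.1 τ - σ • rbar e.2 e.1 τ)).2‖ ^ 2))))
    -- the shifted average position of the accessible robots
    (zbar : ℝ → EuclideanSpace ℝ (Fin 2))
    (hz : ∀ t, zbar t = (1 / (m : ℝ)) • ∑ i ∈ Vh, q i t - qr) :
    ∀ t, HasDerivAt S
        (-(1 / (m : ℝ)) * ∑ i, ∑ j, a i j * ‖q i t - rq i j t‖ ^ 2 + ⟪zbar t, uh t⟫) t ∧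
      -(1 / (m : ℝ)) * ∑ i, ∑ j, a i j * ‖q i t - rq i j t‖ ^ 2 + ⟪zbar t, uh t⟫
        ≤ ⟪zbar t, uh t⟫ := by
  classical
  intro t
  have hmpos : (0:ℝ) < (m:ℝ) := by
    rw [hm]; exact_mod_cast Finset.card_pos.mpr hVh
  have hmne : (m:ℝ) ≠ 0 := ne_of_gt hmpos
  -- continuity facts
  have hqc : ∀ i, Continuous (q i) := by
    intro i
    have hd : Differentiable ℝ (q i) := fun s => (hqdyn i s).differentiableAt
    exact hd.continuous
  have hξc : ∀ i, Continuous (ξ i) := by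
    intro i
    have hd : Differentiable ℝ (ξ i) := fun s => (hξdyn i s).differentiableAt
    exact hd.continuous
  have hpc : ∀ i j, Continuous (p i j) := by
    intro i j
    rw [funext (hp i j)]
    exact Continuous.prodMk
      ((((hrq i j).sub (hqc i)).const_smul (a i j)).sub
        (((hrξ i j).sub (hξc i)).const_smul (b i j)))
      (((hrq i j).sub (hqc i)).const_smul (b i j))
  have hrbc : ∀ i j, Continuous (rbar i j) := by
    intro i j
    rw [funext (hrbar i j)]
    exact Continuous.prodMk ((hrq i j).sub continuous_const) (hrξ i j)
  have hI1 : ∀ i j : Fin n, Continuous (fun τ =>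
      ‖((1 / Real.sqrt (2 * σ)) • (-p i j τ + σ • rbar i j τ)).1‖ ^ 2
        + ‖((1 / Real.sqrt (2 * σ)) • (-p i j τ + σ • rbar i j τ)).2‖ ^ 2) := by
    intro i j
    have hX : Continuous fun τ => (1 / Real.sqrt (2 * σ)) • (-p i j τ + σ • rbar i j τ) :=
      (((hpc i j).neg).add ((hrbc i j).const_smul σ)).const_smul (1 / Real.sqrt (2 * σ))
    exact (hX.fst.norm.pow 2).add (hX.snd.norm.pow 2)
  have hI2 : ∀ i j : Fin n, Continuous (fun τ =>
      ‖((1 / Real.sqrt (2 * σ)) • (p i j τ - σ • rbar i j τ)).1‖ ^ 2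
        + ‖((1 / Real.sqrt (2 * σ)) • (p i j τ - σ • rbar i j τ)).2‖ ^ 2) := by
    intro i j
    have hX : Continuous fun τ => (1 / Real.sqrt (2 * σ)) • (p i j τ - σ • rbar i j τ) :=
      ((hpc i j).sub ((hrbc i j).const_smul σ)).const_smul (1 / Real.sqrt (2 * σ))
    exact (hX.fst.norm.pow 2).add (hX.snd.norm.pow 2)
  -- derivative of the robot energies, in decomposed form
  have hrob : ∀ i : Fin n, HasDerivAt
      (fun u => 1 / 2 * ‖q i u - qr‖ ^ 2 + 1 / 2 * ‖ξ i u‖ ^ 2)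
      (∑ j, (⟪q i t - qr, a i j • (rq i j t - q i t)⟫
          - ⟪q i t - qr, b i j • (rξ i j t - ξ i t)⟫
          + ⟪ξ i t, b i j • (rq i j t - q i t)⟫)
        + δ i * ⟪q i t - qr, uh t⟫) t := by
    intro i
    have h1 : HasDerivAt (fun u => q i u - qr)
        (∑ j, a i j • (rq i j t - q i t) - ∑ j, b i j • (rξ i j t - ξ i t) + δ i • uh t) t :=
      (hqdyn i t).sub_const qr
    have h2 := hξdyn i t
    have hq2 : HasDerivAt (fun u => 1 / 2 * ‖q i u - qr‖ ^ 2)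
        ⟪q i t - qr, ∑ j, a i j • (rq i j t - q i t) - ∑ j, b i j • (rξ i j t - ξ i t)
          + δ i • uh t⟫ t := by
      have hi := HasDerivAt.inner ℝ h1 h1
      have hfun : (fun u => 1 / 2 * ‖q i u - qr‖ ^ 2)
          = fun u => 1 / 2 * ⟪q i u - qr, q i u - qr⟫ := by
        funext u; rw [real_inner_self_eq_norm_sq]
      rw [hfun]
      refine aux_congr_deriv (hi.const_mul (1/2 : ℝ)) ?_
      rw [real_inner_comm (q i t - qr)]
      ring
    have hξ2 : HasDerivAt (fun u => 1 / 2 * ‖ξ i u‖ ^ 2)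
        ⟪ξ i t, ∑ j, b i j • (rq i j t - q i t)⟫ t := by
      have hi := HasDerivAt.inner ℝ h2 h2
      have hfun : (fun u => 1 / 2 * ‖ξ i u‖ ^ 2)
          = fun u => 1 / 2 * ⟪ξ i u, ξ i u⟫ := by
        funext u; rw [real_inner_self_eq_norm_sq]
      rw [hfun]
      refine aux_congr_deriv (hi.const_mul (1/2 : ℝ)) ?_
      rw [real_inner_comm (ξ i t)]
      ring
    refine aux_congr_deriv (hq2.add hξ2) ?_
    simp only [inner_add_right, inner_sub_right, inner_sum, real_inner_smul_right,
      Finset.sum_add_distrib, Finset.sum_sub_distrib]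
    ring
  -- derivative of the channel storages, in simplified form
  have hψ : ∀ e ∈ E, HasDerivAt
      (fun u => 1 / 2 * (∫ τ in (u - T)..u,
            (‖((1 / Real.sqrt (2 * σ)) • (-p e.1 e.2 τ + σ • rbar e.1 e.2 τ)).1‖ ^ 2
              + ‖((1 / Real.sqrt (2 * σ)) • (-p e.1 e.2 τ + σ • rbar e.1 e.2 τ)).2‖ ^ 2))
          + 1 / 2 * (∫ τ in (u - T)..u,
            (‖((1 / Real.sqrt (2 * σ)) • (p e.2 e.1 τ - σ • rbar e.2 e.1 τ)).1‖ ^ 2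
              + ‖((1 / Real.sqrt (2 * σ)) • (p e.2 e.1 τ - σ • rbar e.2 e.1 τ)).2‖ ^ 2)))
      (-(⟪(p e.1 e.2 t).1, (rbar e.1 e.2 t).1⟫ + ⟪(p e.1 e.2 t).2, (rbar e.1 e.2 t).2⟫)
        + -(⟪(p e.2 e.1 t).1, (rbar e.2 e.1 t).1⟫
            + ⟪(p e.2 e.1 t).2, (rbar e.2 e.1 t).2⟫)) t := by
    intro e he
    have hadjE : G.Adj e.1 e.2 := (hE e.1 e.2).mpr (Or.inl he)
    refine aux_congr_deriv
      (((aux_window_deriv (hI1 e.1 e.2) T t).const_mul (1/2 : ℝ)).add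
        ((aux_window_deriv (hI2 e.2 e.1) T t).const_mul (1/2 : ℝ))) ?_
    have h1 := htrans1 e.1 e.2 hadjE t
    have h2 := htrans2 e.1 e.2 hadjE t
    have h1a := congrArg Prod.fst h1
    have h1b := congrArg Prod.snd h1
    have h2a := congrArg Prod.fst h2
    have h2b := congrArg Prod.snd h2
    simp only [Prod.smul_fst, Prod.smul_snd, Prod.fst_add, Prod.snd_add, Prod.fst_neg,
      Prod.snd_neg, Prod.fst_sub, Prod.snd_sub] at h1a h1b h2a h2b ⊢
    rw [← h1a, ← h1b, ← h2a, ← h2b]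
    rw [aux_negnorm (1 / Real.sqrt (2 * σ)) σ (p e.1 e.2 t).1 (rbar e.1 e.2 t).1,
      aux_negnorm (1 / Real.sqrt (2 * σ)) σ (p e.1 e.2 t).2 (rbar e.1 e.2 t).2]
    have s1 := aux_scatter σ hσ (p e.1 e.2 t).1 (rbar e.1 e.2 t).1
    have s2 := aux_scatter σ hσ (p e.1 e.2 t).2 (rbar e.1 e.2 t).2
    have s3 := aux_scatter' σ hσ (p e.2 e.1 t).1 (rbar e.2 e.1 t).1
    have s4 := aux_scatter' σ hσ (p e.2 e.1 t).2 (rbar e.2 e.1 t).2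
    linarith [s1, s2, s3, s4]
  -- total raw derivative
  have hDraw := ((HasDerivAt.fun_sum (fun (i : Fin n) (_ : i ∈ Finset.univ) => hrob i)).const_mul
      (1 / (m:ℝ))).add ((HasDerivAt.fun_sum hψ).const_mul (1 / (m:ℝ)))
  -- F vanishes off edges
  have hvanish : ∀ i j, ¬G.Adj i j →
      -(⟪(p i j t).1, (rbar i j t).1⟫ + ⟪(p i j t).2, (rbar i j t).2⟫) = 0 := by
    intro i j hnadj
    obtain ⟨ha0, hb0⟩ := hoff i j hnadj
    rw [hp i j t]
    simp [ha0, hb0]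
  have hES := aux_edge_sum G E hE hE1
    (fun i j => -(⟪(p i j t).1, (rbar i j t).1⟫ + ⟪(p i j t).2, (rbar i j t).2⟫)) hvanish
  -- the per-pair power balance
  have hpairm : ∀ i j : Fin n,
      (⟪q i t - qr, a i j • (rq i j t - q i t)⟫ - ⟪q i t - qr, b i j • (rξ i j t - ξ i t)⟫
        + ⟪ξ i t, b i j • (rq i j t - q i t)⟫)
        + -(⟪(p i j t).1, (rbar i j t).1⟫ + ⟪(p i j t).2, (rbar i j t).2⟫)
        = -(a i j * ‖q i t - rq i j t‖ ^ 2) := by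
    intro i j
    have hrb : rbar i j t
        = ((rq i j t - q i t) + (q i t - qr), (rξ i j t - ξ i t) + ξ i t) := by
      rw [hrbar i j t]
      exact Prod.ext (by module) (by module)
    rw [hp i j t, hrb, norm_sub_rev]
    exact aux_pair (a i j) (b i j) (rq i j t - q i t) (rξ i j t - ξ i t) (q i t - qr) (ξ i t)
  -- the human-input term
  have hδfinal : 1 / (m:ℝ) * ∑ i, δ i * ⟪q i t - qr, uh t⟫ = ⟪zbar t, uh t⟫ := by
    have h1 : ∑ i, δ i * ⟪q i t - qr, uh t⟫ = ∑ i ∈ Vh, ⟪q i t - qr, uh t⟫ := by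
      simp only [hδ, ite_mul, one_mul, zero_mul, Finset.sum_ite_mem, Finset.univ_inter]
    have h2 : (1 / (m:ℝ)) * ((Vh.card : ℕ) : ℝ) = 1 := by
      rw [← hm]; field_simp
    rw [h1, ← sum_inner, ← real_inner_smul_left]
    congr 1
    rw [hz t, Finset.sum_sub_distrib, Finset.sum_const, smul_sub,
      ← Nat.cast_smul_eq_nsmul ℝ, smul_smul, h2, one_smul]
  refine ⟨?_, ?_⟩
  · rw [show S = _ from funext hS]
    refine aux_congr_deriv hDraw ?_
    rw [hES, Finset.sum_add_distrib, mul_add, hδfinal]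
    have hcomb : (∑ i, ∑ j, (⟪q i t - qr, a i j • (rq i j t - q i t)⟫
          - ⟪q i t - qr, b i j • (rξ i j t - ξ i t)⟫
          + ⟪ξ i t, b i j • (rq i j t - q i t)⟫))
        + (∑ i, ∑ j, -(⟪(p i j t).1, (rbar i j t).1⟫ + ⟪(p i j t).2, (rbar i j t).2⟫))
        = -(∑ i, ∑ j, a i j * ‖q i t - rq i j t‖ ^ 2) := by
      rw [← Finset.sum_add_distrib, ← Finset.sum_neg_distrib]
      refine Finset.sum_congr rfl fun i _ => ?_
      rw [← Finset.sum_add_distrib, ← Finset.sum_neg_distrib]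
      exact Finset.sum_congr rfl fun j _ => hpairm i j
    linear_combination (1 / (m:ℝ)) * hcomb
  · have hnn : (0:ℝ) ≤ ∑ i, ∑ j, a i j * ‖q i t - rq i j t‖ ^ 2 :=
      Finset.sum_nonneg fun i _ => Finset.sum_nonneg fun j _ =>
        mul_nonneg (ha i j) (by positivity)
    have h0 : (0:ℝ) ≤ 1 / (m:ℝ) * ∑ i, ∑ j, a i j * ‖q i t - rq i j t‖ ^ 2 :=
      mul_nonneg (by positivity) hnn
    linarith
end

section
/- Under the hypotheses of the delayed-network passivity result (dynamics, scattering transmission relations, symmetric gains, total storage S, and z̄ = (1/m)Σ_{i∈V_h}q_i − q_r), assume additionally there exist ε > 0 and a differentiable function S_h : ℝ → ℝ with S_h(t) ≥ 0 for all t and S_h'(t) ≤ ⟨q_r − z(t), u_h(t)⟩ − ε‖q_r − z(t)‖² for all t (input strict passivity of the human decision process, where z(t) = (1/m)Σ_{i∈V_h}q_i(t)). Then the function U(t) = S(t) + S_h(t) is nonincreasing; in particular, for all t ≥ 0: S(t) ≤ S(0) + S_h(0), every ‖q_i(t) − q_r‖ and ‖ξ_i(t)‖ is bounded by √(2m(S(0)+S_h(0))),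 and ∫_0^t [(1/m) Σ_i Σ_j a_{ij}‖q_i(τ) − r^q_{ij}(τ)‖² + ε‖z̄(τ)‖²] dτ ≤ S(0) + S_h(0). -/
open RealInnerProductSpace

variable {F : Type*} [NormedAddCommGroup F] [InnerProductSpace ℝ F]

lemma aux_half_norm_sq {f : ℝ → F} {f' : F} {t : ℝ} (hf : HasDerivAt f f' t) :
    HasDerivAt (fun s => 1 / 2 * ‖f s‖ ^ 2) ⟪f t, f'⟫ t := by
  have h := (hf.inner ℝ hf).const_mul (1 / 2 : ℝ)
  have he : (fun s => 1 / 2 * ‖f s‖ ^ 2) = fun s => 1 / 2 * ⟪f s, f s⟫ := by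
    funext s; rw [real_inner_self_eq_norm_sq]
  rw [he]
  refine h.congr_deriv ?_
  rw [real_inner_comm f' (f t)]; ring

lemma aux_ftc {g : ℝ → ℝ} (hg : Continuous g) (T t : ℝ) :
    HasDerivAt (fun s => ∫ τ in (s - T)..s, g τ) (g t - g (t - T)) t := by
  have key : (fun s => ∫ τ in (s - T)..s, g τ)
      = fun s => (∫ τ in (0:ℝ)..s, g τ) - ∫ τ in (0:ℝ)..(s - T), g τ := by
    funext s
    exact (intervalIntegral.integral_interval_sub_left (hg.intervalIntegrable _ _)
      (hg.intervalIntegrable _ _)).symm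
  have h1 : HasDerivAt (fun s => ∫ τ in (0:ℝ)..s, g τ) (g t) t :=
    intervalIntegral.integral_hasDerivAt_right (hg.intervalIntegrable _ _)
      (hg.stronglyMeasurableAtFilter _ _) hg.continuousAt
  have h3 : HasDerivAt (fun u => ∫ τ in (0:ℝ)..u, g τ) (g (t - T)) (t - T) :=
    intervalIntegral.integral_hasDerivAt_right (hg.intervalIntegrable _ _)
      (hg.stronglyMeasurableAtFilter _ _) hg.continuousAt
  have h2 : HasDerivAt (fun s : ℝ => ∫ τ in (0:ℝ)..(s - T), g τ) (g (t - T)) t := by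
    have hb : HasDerivAt (fun s : ℝ => s - T) 1 t := (hasDerivAt_id t).sub_const T
    exact (h3.comp t hb).congr_deriv (mul_one _)
  rw [key]
  exact h1.sub h2

lemma aux_pair_s8 (a b : ℝ) (qi ξi rqv rξv qrv : F) :
    ⟪qi - qrv, a • (rqv - qi) - b • (rξv - ξi)⟫ + ⟪ξi, b • (rqv - qi)⟫
      - (⟪a • (rqv - qi) - b • (rξv - ξi), rqv - qrv⟫ + ⟪b • (rqv - qi), rξv⟫)
      = -(a * ‖qi - rqv‖ ^ 2) := by
  have hX : ⟪qi - qrv, a • (rqv - qi) - b • (rξv - ξi)⟫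
        - ⟪a • (rqv - qi) - b • (rξv - ξi), rqv - qrv⟫
      = ⟪qi - rqv, a • (rqv - qi) - b • (rξv - ξi)⟫ := by
    rw [real_inner_comm (rqv - qrv) (a • (rqv - qi) - b • (rξv - ξi)), ← inner_sub_left,
      sub_sub_sub_cancel_right]
  have hY : ⟪ξi, b • (rqv - qi)⟫ - ⟪b • (rqv - qi), rξv⟫ = ⟪ξi - rξv, b • (rqv - qi)⟫ := by
    rw [real_inner_comm rξv (b • (rqv - qi)), ← inner_sub_left]
  have h1 : ⟪qi - rqv, rqv - qi⟫ = -(‖qi - rqv‖ ^ 2 : ℝ) := by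
    rw [← neg_sub qi rqv, inner_neg_right, real_inner_self_eq_norm_sq]
  have h2 : ⟪ξi - rξv, rqv - qi⟫ = (⟪qi - rqv, rξv - ξi⟫ : ℝ) := by
    rw [← neg_sub rξv ξi, ← neg_sub qi rqv, inner_neg_neg, real_inner_comm]
  have expand : ⟪qi - rqv, a • (rqv - qi) - b • (rξv - ξi)⟫ + ⟪ξi - rξv, b • (rqv - qi)⟫
      = -(a * ‖qi - rqv‖ ^ 2) := by
    rw [inner_sub_right, real_inner_smul_right, real_inner_smul_right, real_inner_smul_right,
      h1, h2]
    ring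
  linarith [hX, hY, expand]

lemma aux_edge (σ : ℝ) (hσ : 0 < σ) (P Q R S : F) :
    1/2 * ((1/(2*σ)) * ‖-P + σ•R‖^2 - (1/(2*σ)) * ‖Q + σ•S‖^2)
      + 1/2 * ((1/(2*σ)) * ‖Q - σ•S‖^2 - (1/(2*σ)) * ‖-P - σ•R‖^2)
      = -(⟪P,R⟫ + ⟪Q,S⟫) := by
  have e1 : -P + σ•R = σ•R - P := by abel
  have e2 : -P - σ•R = -(P + σ•R) := by abel
  rw [e1, e2, norm_neg, norm_sub_sq_real, norm_sub_sq_real, norm_add_sq_real, norm_add_sq_real,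
    real_inner_smul_left, real_inner_smul_right, real_inner_smul_right, real_inner_comm R P]
  field_simp
  ring

lemma aux_pair_sum {n : ℕ} (G : SimpleGraph (Fin n))
    (E : Finset (Fin n × Fin n))
    (hE : ∀ i j, G.Adj i j ↔ ((i, j) ∈ E ∨ (j, i) ∈ E))
    (hE1 : ∀ e ∈ E, (e.2, e.1) ∉ E)
    (Fn : Fin n → Fin n → ℝ) (hF : ∀ i j, ¬G.Adj i j → Fn i j = 0) :
    ∑ e ∈ E, (Fn e.1 e.2 + Fn e.2 e.1) = ∑ i, ∑ j, Fn i j := by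
  classical
  have hdisj : Disjoint E (E.image Prod.swap) := by
    rw [Finset.disjoint_left]
    rintro e he hmem
    obtain ⟨e', he', heq⟩ := Finset.mem_image.mp hmem
    exact hE1 e he (by rw [← heq]; simpa using he')
  have h1 : ∑ e ∈ E, (Fn e.1 e.2 + Fn e.2 e.1)
      = ∑ e ∈ E ∪ E.image Prod.swap, Fn e.1 e.2 := by
    rw [Finset.sum_union hdisj, Finset.sum_add_distrib]
    congr 1
    rw [Finset.sum_image (fun x _ y _ h => Prod.swap_injective h)]
    rfl
  rw [h1, ← Finset.sum_product' (f := fun i j => Fn i j)]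
  apply Finset.sum_subset
  · intro x _
    simp
  · intro x _ hx
    apply hF
    rw [hE]
    rintro (hmem | hmem)
    · exact hx (Finset.mem_union_left _ hmem)
    · exact hx (Finset.mem_union_right _ (Finset.mem_image.mpr ⟨_, hmem, rfl⟩))

set_option maxHeartbeats 4000000 in
/-- Under the hypotheses of the delayed-network passivity result, if the
human decision process is input strictly passive (`S_h' ≤ ⟨q_r − z, u_h⟩ − ε‖q_r − z‖²`
with `S_h ≥ 0`), then `U = S + S_h` is nonincreasing; in particular, for all `t ≥ 0`:
`S(t) ≤ S(0) + S_h(0)`, every `‖qᵢ(t) − q_r‖` and `‖ξᵢ(t)‖` is bounded by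
`√(2m(S(0)+S_h(0)))`, and
`∫₀ᵗ [(1/m)ΣᵢΣⱼ aᵢⱼ‖qᵢ − r^q_{ij}‖² + ε‖z̄‖²] ≤ S(0) + S_h(0)`. -/
theorem stmt_8 {n : ℕ} (G : SimpleGraph (Fin n))
    (a b : Fin n → Fin n → ℝ)
    (hsym_a : ∀ i j, a i j = a j i) (hsym_b : ∀ i j, b i j = b j i)
    (ha : ∀ i j, 0 ≤ a i j)
    (hadj : ∀ i j, G.Adj i j ↔ 0 < a i j)
    (hoff : ∀ i j, ¬G.Adj i j → a i j = 0 ∧ b i j = 0)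
    (T σ : ℝ) (hT : 0 < T) (hσ : 0 < σ)
    (qr : EuclideanSpace ℝ (Fin 2))
    (Vh : Finset (Fin n)) (hVh : Vh.Nonempty) (m : ℕ) (hm : m = Vh.card)
    (δ : Fin n → ℝ) (hδ : ∀ i, δ i = if i ∈ Vh then 1 else 0)
    (uh : ℝ → EuclideanSpace ℝ (Fin 2)) (huh : Continuous uh)
    (rq rξ : Fin n → Fin n → ℝ → EuclideanSpace ℝ (Fin 2))
    (hrq : ∀ i j, Continuous (rq i j)) (hrξ : ∀ i j, Continuous (rξ i j))
    (q ξ : Fin n → ℝ → EuclideanSpace ℝ (Fin 2))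
    -- the delayed cooperative dynamics
    (hξdyn : ∀ i t, HasDerivAt (ξ i) (∑ j, b i j • (rq i j t - q i t)) t)
    (hqdyn : ∀ i t, HasDerivAt (q i)
      (∑ j, a i j • (rq i j t - q i t) - ∑ j, b i j • (rξ i j t - ξ i t) + δ i • uh t) t)
    -- `p_{ij} = M_{ij}(r_{ij} − (qᵢ, ξᵢ))` with `M_{ij}(x₁,x₂) = (aᵢⱼx₁ − bᵢⱼx₂, bᵢⱼx₁)`
    (p : Fin n → Fin n → ℝ → EuclideanSpace ℝ (Fin 2) × EuclideanSpace ℝ (Fin 2))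
    (hp : ∀ i j t, p i j t
      = (a i j • (rq i j t - q i t) - b i j • (rξ i j t - ξ i t),
         b i j • (rq i j t - q i t)))
    -- `r̄_{ij} = (r^q_{ij} − q_r, r^ξ_{ij})`
    (rbar : Fin n → Fin n → ℝ → EuclideanSpace ℝ (Fin 2) × EuclideanSpace ℝ (Fin 2))
    (hrbar : ∀ i j t, rbar i j t = (rq i j t - qr, rξ i j t))
    -- scattering transmission relations along each edge
    (htrans1 : ∀ i j, G.Adj i j → ∀ t : ℝ,
      (1 / Real.sqrt (2 * σ)) • (p j i t + σ • rbar j i t)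
        = (1 / Real.sqrt (2 * σ)) • (-p i j (t - T) + σ • rbar i j (t - T)))
    (htrans2 : ∀ i j, G.Adj i j → ∀ t : ℝ,
      (1 / Real.sqrt (2 * σ)) • (-p i j t - σ • rbar i j t)
        = (1 / Real.sqrt (2 * σ)) • (p j i (t - T) - σ • rbar j i (t - T)))
    -- an orientation of the edge set: each undirected edge of `G` appears exactly once
    (E : Finset (Fin n × Fin n))
    (hE : ∀ i j, G.Adj i j ↔ ((i, j) ∈ E ∨ (j, i) ∈ E))
    (hE1 : ∀ e ∈ E, (e.2, e.1) ∉ E)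
    -- the total storage function
    (S : ℝ → ℝ)
    (hS : ∀ t, S t
      = (1 / (m : ℝ)) * ∑ i, (1 / 2 * ‖q i t - qr‖ ^ 2 + 1 / 2 * ‖ξ i t‖ ^ 2)
        + (1 / (m : ℝ)) * ∑ e ∈ E,
            (1 / 2 * (∫ τ in (t - T)..t,
                (‖((1 / Real.sqrt (2 * σ)) • (-p e.1 e.2 τ + σ • rbar e.1 e.2 τ)).1‖ ^ 2
                  + ‖((1 / Real.sqrt (2 * σ)) • (-p e.1 e.2 τ + σ • rbar e.1 e.2 τ)).2‖ ^ 2))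
              + 1 / 2 * (∫ τ in (t - T)..t,
                (‖((1 / Real.sqrt (2 * σ)) • (p e.2 e.1 τ - σ • rbar e.2 e.1 τ)).1‖ ^ 2
                  + ‖((1 / Real.sqrt (2 * σ)) • (p e.2 e.1 τ - σ • rbar e.2 e.1 τ)).2‖ ^ 2))))
    -- average position of accessible robots and its shifted version
    (z zbar : ℝ → EuclideanSpace ℝ (Fin 2))
    (hzdef : ∀ t, z t = (1 / (m : ℝ)) • ∑ i ∈ Vh, q i t)
    (hz : ∀ t, zbar t = z t - qr)
    -- input strict passivity of the human decision process
    (ε : ℝ) (hε : 0 < ε) (Sh : ℝ → ℝ)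
    (hSh_nonneg : ∀ t, 0 ≤ Sh t) (hSh_diff : Differentiable ℝ Sh)
    (hSh : ∀ t, deriv Sh t ≤ ⟪qr - z t, uh t⟫ - ε * ‖qr - z t‖ ^ 2)
    (U : ℝ → ℝ) (hU : ∀ t, U t = S t + Sh t) :
    Antitone U ∧
    ∀ t, 0 ≤ t →
      S t ≤ S 0 + Sh 0 ∧
      (∀ i, ‖q i t - qr‖ ≤ Real.sqrt (2 * m * (S 0 + Sh 0)) ∧
            ‖ξ i t‖ ≤ Real.sqrt (2 * m * (S 0 + Sh 0))) ∧
      (∫ τ in (0:ℝ)..t,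
          ((1 / (m : ℝ)) * ∑ i, ∑ j, a i j * ‖q i τ - rq i j τ‖ ^ 2
            + ε * ‖zbar τ‖ ^ 2)) ≤ S 0 + Sh 0 := by
  classical
  have hm0 : 0 < (m : ℝ) := by
    have h1 : 0 < Vh.card := Finset.card_pos.mpr hVh
    rw [hm]; exact_mod_cast h1
  -- continuity facts
  have hqc : ∀ i, Continuous (q i) := by
    intro i
    have hd : Differentiable ℝ (q i) := fun t => (hqdyn i t).differentiableAt
    exact hd.continuous
  have hξc : ∀ i, Continuous (ξ i) := by
    intro i
    have hd : Differentiable ℝ (ξ i) := fun t => (hξdyn i t).differentiableAt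
    exact hd.continuous
  have hpc : ∀ i j, Continuous (p i j) := by
    intro i j
    have hfe : p i j = fun t => ((a i j • (rq i j t - q i t) - b i j • (rξ i j t - ξ i t),
        b i j • (rq i j t - q i t)) : EuclideanSpace ℝ (Fin 2) × EuclideanSpace ℝ (Fin 2)) :=
      funext (hp i j)
    rw [hfe]
    fun_prop
  have hrbarc : ∀ i j, Continuous (rbar i j) := by
    intro i j
    have hfe : rbar i j = fun t => ((rq i j t - qr, rξ i j t) :
        EuclideanSpace ℝ (Fin 2) × EuclideanSpace ℝ (Fin 2)) := funext (hrbar i j)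
    rw [hfe]
    fun_prop
  set c : ℝ := 1 / Real.sqrt (2 * σ) with hc
  have hsq : Real.sqrt (2 * σ) ≠ 0 := by positivity
  have hcne : c ≠ 0 := by rw [hc]; positivity
  have hc2 : c ^ 2 = 1 / (2 * σ) := by
    rw [hc, div_pow, one_pow, Real.sq_sqrt (by positivity : (0:ℝ) ≤ 2 * σ)]
  have hadjE : ∀ e ∈ E, G.Adj e.1 e.2 := fun e he => (hE e.1 e.2).mpr (Or.inl he)
  have hg1c : ∀ e : Fin n × Fin n, Continuous (fun τ =>
      ‖(c • (-p e.1 e.2 τ + σ • rbar e.1 e.2 τ)).1‖ ^ 2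
        + ‖(c • (-p e.1 e.2 τ + σ • rbar e.1 e.2 τ)).2‖ ^ 2) := by
    intro e
    have h1 := hpc e.1 e.2
    have h2 := hrbarc e.1 e.2
    fun_prop
  have hg2c : ∀ e : Fin n × Fin n, Continuous (fun τ =>
      ‖(c • (p e.2 e.1 τ - σ • rbar e.2 e.1 τ)).1‖ ^ 2
        + ‖(c • (p e.2 e.1 τ - σ • rbar e.2 e.1 τ)).2‖ ^ 2) := by
    intro e
    have h1 := hpc e.2 e.1
    have h2 := hrbarc e.2 e.1
    fun_prop
  -- the derivative of the storage function
  have key : ∀ t, HasDerivAt S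
      (-((1 / (m:ℝ)) * ∑ i, ∑ j, a i j * ‖q i t - rq i j t‖ ^ 2) + ⟪z t - qr, uh t⟫) t := by
    intro t
    have hA : HasDerivAt (fun s => (1 / (m:ℝ)) * ∑ i,
          (1 / 2 * ‖q i s - qr‖ ^ 2 + 1 / 2 * ‖ξ i s‖ ^ 2))
        ((1 / (m:ℝ)) * ∑ i,
          (⟪q i t - qr, ∑ j, a i j • (rq i j t - q i t)
              - ∑ j, b i j • (rξ i j t - ξ i t) + δ i • uh t⟫
            + ⟪ξ i t, ∑ j, b i j • (rq i j t - q i t)⟫)) t :=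
      (HasDerivAt.fun_sum fun i _ =>
        (aux_half_norm_sq ((hqdyn i t).sub_const qr)).add
          (aux_half_norm_sq (hξdyn i t))).const_mul _
    have hB : HasDerivAt (fun s => (1 / (m:ℝ)) * ∑ e ∈ E,
        (1 / 2 * (∫ τ in (s - T)..s,
            (‖(c • (-p e.1 e.2 τ + σ • rbar e.1 e.2 τ)).1‖ ^ 2
              + ‖(c • (-p e.1 e.2 τ + σ • rbar e.1 e.2 τ)).2‖ ^ 2))
          + 1 / 2 * (∫ τ in (s - T)..s,
            (‖(c • (p e.2 e.1 τ - σ • rbar e.2 e.1 τ)).1‖ ^ 2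
              + ‖(c • (p e.2 e.1 τ - σ • rbar e.2 e.1 τ)).2‖ ^ 2))))
        ((1 / (m:ℝ)) * ∑ e ∈ E,
          (1 / 2 * ((‖(c • (-p e.1 e.2 t + σ • rbar e.1 e.2 t)).1‖ ^ 2
              + ‖(c • (-p e.1 e.2 t + σ • rbar e.1 e.2 t)).2‖ ^ 2)
            - (‖(c • (-p e.1 e.2 (t - T) + σ • rbar e.1 e.2 (t - T))).1‖ ^ 2
              + ‖(c • (-p e.1 e.2 (t - T) + σ • rbar e.1 e.2 (t - T))).2‖ ^ 2))
          + 1 / 2 * ((‖(c • (p e.2 e.1 t - σ • rbar e.2 e.1 t)).1‖ ^ 2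
              + ‖(c • (p e.2 e.1 t - σ • rbar e.2 e.1 t)).2‖ ^ 2)
            - (‖(c • (p e.2 e.1 (t - T) - σ • rbar e.2 e.1 (t - T))).1‖ ^ 2
              + ‖(c • (p e.2 e.1 (t - T) - σ • rbar e.2 e.1 (t - T))).2‖ ^ 2)))) t :=
      (HasDerivAt.fun_sum fun e _ =>
        ((aux_ftc (hg1c e) T t).const_mul _).add
          ((aux_ftc (hg2c e) T t).const_mul _)).const_mul _
    have hder := hA.add hB
    -- per-edge channel identity
    have hedge : ∀ e ∈ E,
        1 / 2 * ((‖(c • (-p e.1 e.2 t + σ • rbar e.1 e.2 t)).1‖ ^ 2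
            + ‖(c • (-p e.1 e.2 t + σ • rbar e.1 e.2 t)).2‖ ^ 2)
          - (‖(c • (-p e.1 e.2 (t - T) + σ • rbar e.1 e.2 (t - T))).1‖ ^ 2
            + ‖(c • (-p e.1 e.2 (t - T) + σ • rbar e.1 e.2 (t - T))).2‖ ^ 2))
        + 1 / 2 * ((‖(c • (p e.2 e.1 t - σ • rbar e.2 e.1 t)).1‖ ^ 2
            + ‖(c • (p e.2 e.1 t - σ • rbar e.2 e.1 t)).2‖ ^ 2)
          - (‖(c • (p e.2 e.1 (t - T) - σ • rbar e.2 e.1 (t - T))).1‖ ^ 2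
            + ‖(c • (p e.2 e.1 (t - T) - σ • rbar e.2 e.1 (t - T))).2‖ ^ 2))
        = -((⟪(p e.1 e.2 t).1, (rbar e.1 e.2 t).1⟫ + ⟪(p e.1 e.2 t).2, (rbar e.1 e.2 t).2⟫)
            + (⟪(p e.2 e.1 t).1, (rbar e.2 e.1 t).1⟫
              + ⟪(p e.2 e.1 t).2, (rbar e.2 e.1 t).2⟫)) := by
      intro e he
      have hadje := hadjE e he
      have V1 : -p e.1 e.2 (t - T) + σ • rbar e.1 e.2 (t - T)
          = p e.2 e.1 t + σ • rbar e.2 e.1 t :=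
        (smul_right_injective _ hcne (htrans1 e.1 e.2 hadje t)).symm
      have V2 : p e.2 e.1 (t - T) - σ • rbar e.2 e.1 (t - T)
          = -p e.1 e.2 t - σ • rbar e.1 e.2 t :=
        (smul_right_injective _ hcne (htrans2 e.1 e.2 hadje t)).symm
      rw [V1, V2]
      have c1 := aux_edge σ hσ (p e.1 e.2 t).1 (p e.2 e.1 t).1
        (rbar e.1 e.2 t).1 (rbar e.2 e.1 t).1
      have c2 := aux_edge σ hσ (p e.1 e.2 t).2 (p e.2 e.1 t).2
        (rbar e.1 e.2 t).2 (rbar e.2 e.1 t).2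
      simp only [Prod.smul_fst, Prod.smul_snd, Prod.fst_add, Prod.snd_add, Prod.fst_neg,
        Prod.snd_neg, Prod.fst_sub, Prod.snd_sub, norm_smul, mul_pow, Real.norm_eq_abs,
        sq_abs, hc2]
      linarith [c1, c2]
    have hK0 : ∀ i j, ¬G.Adj i j →
        (⟪(p i j t).1, (rbar i j t).1⟫ + ⟪(p i j t).2, (rbar i j t).2⟫ : ℝ) = 0 := by
      intro i j hna
      obtain ⟨ha0, hb0⟩ := hoff i j hna
      rw [hp i j t]
      simp [ha0, hb0]
    have hchan : ∑ e ∈ E,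
        (1 / 2 * ((‖(c • (-p e.1 e.2 t + σ • rbar e.1 e.2 t)).1‖ ^ 2
            + ‖(c • (-p e.1 e.2 t + σ • rbar e.1 e.2 t)).2‖ ^ 2)
          - (‖(c • (-p e.1 e.2 (t - T) + σ • rbar e.1 e.2 (t - T))).1‖ ^ 2
            + ‖(c • (-p e.1 e.2 (t - T) + σ • rbar e.1 e.2 (t - T))).2‖ ^ 2))
        + 1 / 2 * ((‖(c • (p e.2 e.1 t - σ • rbar e.2 e.1 t)).1‖ ^ 2
            + ‖(c • (p e.2 e.1 t - σ • rbar e.2 e.1 t)).2‖ ^ 2)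
          - (‖(c • (p e.2 e.1 (t - T) - σ • rbar e.2 e.1 (t - T))).1‖ ^ 2
            + ‖(c • (p e.2 e.1 (t - T) - σ • rbar e.2 e.1 (t - T))).2‖ ^ 2)))
        = -∑ i, ∑ j, (⟪(p i j t).1, (rbar i j t).1⟫ + ⟪(p i j t).2, (rbar i j t).2⟫) := by
      rw [Finset.sum_congr rfl hedge]
      rw [← aux_pair_sum G E hE hE1
        (fun i j => ⟪(p i j t).1, (rbar i j t).1⟫ + ⟪(p i j t).2, (rbar i j t).2⟫) hK0]
      rw [← Finset.sum_neg_distrib]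
    have hterm : ∀ i : Fin n,
        (⟪q i t - qr, ∑ j, a i j • (rq i j t - q i t)
            - ∑ j, b i j • (rξ i j t - ξ i t) + δ i • uh t⟫
          + ⟪ξ i t, ∑ j, b i j • (rq i j t - q i t)⟫ : ℝ)
        = ∑ j, (⟪q i t - qr, a i j • (rq i j t - q i t) - b i j • (rξ i j t - ξ i t)⟫
            + ⟪ξ i t, b i j • (rq i j t - q i t)⟫) + δ i * ⟪q i t - qr, uh t⟫ := by
      intro i
      rw [inner_add_right, real_inner_smul_right, ← Finset.sum_sub_distrib, inner_sum,
        inner_sum, Finset.sum_add_distrib]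
      ring
    have hLK : ∀ i j,
        (⟪q i t - qr, a i j • (rq i j t - q i t) - b i j • (rξ i j t - ξ i t)⟫
          + ⟪ξ i t, b i j • (rq i j t - q i t)⟫ : ℝ)
        = (⟪(p i j t).1, (rbar i j t).1⟫ + ⟪(p i j t).2, (rbar i j t).2⟫)
          + -(a i j * ‖q i t - rq i j t‖ ^ 2) := by
      intro i j
      have h := aux_pair_s8 (a i j) (b i j) (q i t) (ξ i t) (rq i j t) (rξ i j t) qr
      rw [hp i j t, hrbar i j t]
      dsimp only
      linarith [h]
    have hhum : (1 / (m:ℝ)) * ∑ i, δ i * ⟪q i t - qr, uh t⟫ = ⟪z t - qr, uh t⟫ := by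
      have h1 : ∑ i, δ i * ⟪q i t - qr, uh t⟫ = ∑ i ∈ Vh, ⟪q i t - qr, uh t⟫ := by
        rw [Finset.sum_congr rfl (fun i _ => by rw [hδ i, ite_mul, one_mul, zero_mul])]
        rw [Finset.sum_ite_mem, Finset.univ_inter]
      rw [h1, ← sum_inner, ← real_inner_smul_left]
      congr 1
      rw [Finset.sum_sub_distrib, Finset.sum_const, smul_sub, ← hzdef t, ← hm,
        ← Nat.cast_smul_eq_nsmul ℝ m qr, smul_smul, one_div_mul_cancel (ne_of_gt hm0), one_smul]
    have hvaleq : ((1 / (m:ℝ)) * ∑ i,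
          (⟪q i t - qr, ∑ j, a i j • (rq i j t - q i t)
              - ∑ j, b i j • (rξ i j t - ξ i t) + δ i • uh t⟫
            + ⟪ξ i t, ∑ j, b i j • (rq i j t - q i t)⟫))
        + ((1 / (m:ℝ)) * ∑ e ∈ E,
          (1 / 2 * ((‖(c • (-p e.1 e.2 t + σ • rbar e.1 e.2 t)).1‖ ^ 2
              + ‖(c • (-p e.1 e.2 t + σ • rbar e.1 e.2 t)).2‖ ^ 2)
            - (‖(c • (-p e.1 e.2 (t - T) + σ • rbar e.1 e.2 (t - T))).1‖ ^ 2
              + ‖(c • (-p e.1 e.2 (t - T) + σ • rbar e.1 e.2 (t - T))).2‖ ^ 2))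
          + 1 / 2 * ((‖(c • (p e.2 e.1 t - σ • rbar e.2 e.1 t)).1‖ ^ 2
              + ‖(c • (p e.2 e.1 t - σ • rbar e.2 e.1 t)).2‖ ^ 2)
            - (‖(c • (p e.2 e.1 (t - T) - σ • rbar e.2 e.1 (t - T))).1‖ ^ 2
              + ‖(c • (p e.2 e.1 (t - T) - σ • rbar e.2 e.1 (t - T))).2‖ ^ 2))))
        = -((1 / (m:ℝ)) * ∑ i, ∑ j, a i j * ‖q i t - rq i j t‖ ^ 2) + ⟪z t - qr, uh t⟫ := by
      rw [hchan, Finset.sum_congr rfl (fun i _ => hterm i), Finset.sum_add_distrib,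
        Finset.sum_congr rfl (fun i (_ : i ∈ Finset.univ) =>
          Finset.sum_congr rfl (fun j _ => hLK i j)),
        Finset.sum_congr rfl (fun i (_ : i ∈ Finset.univ) =>
          Finset.sum_add_distrib (s := Finset.univ)),
        Finset.sum_add_distrib]
      have hneg : ∑ i, ∑ j, -(a i j * ‖q i t - rq i j t‖ ^ 2)
          = -∑ i, ∑ j, a i j * ‖q i t - rq i j t‖ ^ 2 := by
        simp [Finset.sum_neg_distrib]
      rw [hneg]
      linear_combination hhum
    rw [funext hS]
    rw [hvaleq] at hder
    exact hder
  -- the dissipation rate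
  set W : ℝ → ℝ := fun τ => (1 / (m : ℝ)) * ∑ i, ∑ j, a i j * ‖q i τ - rq i j τ‖ ^ 2
      + ε * ‖zbar τ‖ ^ 2 with hWdef
  have hzbar : zbar = fun τ => (1 / (m:ℝ)) • (∑ i ∈ Vh, q i τ) - qr := by
    funext τ; rw [hz τ, hzdef τ]
  have hWc : Continuous W := by
    rw [hWdef, hzbar]
    fun_prop
  have hW0 : ∀ τ, 0 ≤ W τ := by
    intro τ
    have h1 : 0 ≤ ∑ i, ∑ j, a i j * ‖q i τ - rq i j τ‖ ^ 2 :=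
      Finset.sum_nonneg fun i _ => Finset.sum_nonneg fun j _ =>
        mul_nonneg (ha i j) (sq_nonneg _)
    have h2 : (0:ℝ) ≤ 1 / (m:ℝ) := by positivity
    have h3 : (0:ℝ) ≤ ε * ‖zbar τ‖ ^ 2 := by positivity
    simp only [hWdef]
    exact add_nonneg (mul_nonneg h2 h1) h3
  -- derivative of U
  have hUd : ∀ t, HasDerivAt U
      ((-((1 / (m:ℝ)) * ∑ i, ∑ j, a i j * ‖q i t - rq i j t‖ ^ 2) + ⟪z t - qr, uh t⟫)
        + deriv Sh t) t := by
    intro t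
    rw [funext hU]
    exact (key t).add (hSh_diff t).hasDerivAt
  have hderivU : ∀ t, deriv U t ≤ -W t := by
    intro t
    rw [(hUd t).deriv]
    have h1 := hSh t
    have h2 : (⟪z t - qr, uh t⟫ : ℝ) + ⟪qr - z t, uh t⟫ = 0 := by
      rw [← inner_add_left]
      simp
    have h3 : ‖qr - z t‖ ^ 2 = ‖zbar t‖ ^ 2 := by rw [hz t, norm_sub_rev]
    rw [h3] at h1
    simp only [hWdef]
    linarith [h1, h2]
  have hUmono : Antitone U :=
    antitone_of_deriv_nonpos (fun t => (hUd t).differentiableAt)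
      (fun t => by
        rw [(hUd t).deriv]
        have := hderivU t
        rw [(hUd t).deriv] at this
        exact le_trans this (neg_nonpos.mpr (hW0 t)))
  have hSnonneg : ∀ t, 0 ≤ S t := by
    intro t
    rw [hS t]
    have h1 : (0:ℝ) ≤ ∑ i, (1 / 2 * ‖q i t - qr‖ ^ 2 + 1 / 2 * ‖ξ i t‖ ^ 2) := by positivity
    have h2 : (0:ℝ) ≤ ∑ e ∈ E,
        (1 / 2 * (∫ τ in (t - T)..t,
            (‖(c • (-p e.1 e.2 τ + σ • rbar e.1 e.2 τ)).1‖ ^ 2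
              + ‖(c • (-p e.1 e.2 τ + σ • rbar e.1 e.2 τ)).2‖ ^ 2))
          + 1 / 2 * (∫ τ in (t - T)..t,
            (‖(c • (p e.2 e.1 τ - σ • rbar e.2 e.1 τ)).1‖ ^ 2
              + ‖(c • (p e.2 e.1 τ - σ • rbar e.2 e.1 τ)).2‖ ^ 2))) := by
      refine Finset.sum_nonneg fun e _ => ?_
      have hab : t - T ≤ t := by linarith
      have hi1 : (0:ℝ) ≤ ∫ τ in (t - T)..t,
          (‖(c • (-p e.1 e.2 τ + σ • rbar e.1 e.2 τ)).1‖ ^ 2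
            + ‖(c • (-p e.1 e.2 τ + σ • rbar e.1 e.2 τ)).2‖ ^ 2) :=
        intervalIntegral.integral_nonneg hab (fun τ _ => by positivity)
      have hi2 : (0:ℝ) ≤ ∫ τ in (t - T)..t,
          (‖(c • (p e.2 e.1 τ - σ • rbar e.2 e.1 τ)).1‖ ^ 2
            + ‖(c • (p e.2 e.1 τ - σ • rbar e.2 e.1 τ)).2‖ ^ 2) :=
        intervalIntegral.integral_nonneg hab (fun τ _ => by positivity)
      positivity
    have h3 : (0:ℝ) ≤ 1 / (m:ℝ) := by positivity
    exact add_nonneg (mul_nonneg h3 h1) (mul_nonneg h3 h2)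
  have hU0 : ∀ t, 0 ≤ U t := fun t => by
    rw [hU t]; exact add_nonneg (hSnonneg t) (hSh_nonneg t)
  refine ⟨hUmono, fun t ht => ?_⟩
  have hUt : U t ≤ U 0 := hUmono ht
  rw [hU t, hU 0] at hUt
  have hSt : S t ≤ S 0 + Sh 0 := by linarith [hSh_nonneg t]
  refine ⟨hSt, ?_, ?_⟩
  · -- norm bounds
    intro i
    have hle : 1 / 2 * ‖q i t - qr‖ ^ 2 + 1 / 2 * ‖ξ i t‖ ^ 2
        ≤ ∑ i', (1 / 2 * ‖q i' t - qr‖ ^ 2 + 1 / 2 * ‖ξ i' t‖ ^ 2) :=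
      Finset.single_le_sum (f := fun i' => 1 / 2 * ‖q i' t - qr‖ ^ 2 + 1 / 2 * ‖ξ i' t‖ ^ 2)
        (fun i' _ => by positivity) (Finset.mem_univ i)
    have hrest : (1 / (m:ℝ)) * (1 / 2 * ‖q i t - qr‖ ^ 2 + 1 / 2 * ‖ξ i t‖ ^ 2) ≤ S t := by
      rw [hS t]
      have h2 : (0:ℝ) ≤ (1 / (m:ℝ)) * ∑ e ∈ E,
          (1 / 2 * (∫ τ in (t - T)..t,
              (‖(c • (-p e.1 e.2 τ + σ • rbar e.1 e.2 τ)).1‖ ^ 2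
                + ‖(c • (-p e.1 e.2 τ + σ • rbar e.1 e.2 τ)).2‖ ^ 2))
            + 1 / 2 * (∫ τ in (t - T)..t,
              (‖(c • (p e.2 e.1 τ - σ • rbar e.2 e.1 τ)).1‖ ^ 2
                + ‖(c • (p e.2 e.1 τ - σ • rbar e.2 e.1 τ)).2‖ ^ 2))) := by
        refine mul_nonneg (by positivity) (Finset.sum_nonneg fun e _ => ?_)
        have hab : t - T ≤ t := by linarith
        have hi1 : (0:ℝ) ≤ ∫ τ in (t - T)..t,
            (‖(c • (-p e.1 e.2 τ + σ • rbar e.1 e.2 τ)).1‖ ^ 2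
              + ‖(c • (-p e.1 e.2 τ + σ • rbar e.1 e.2 τ)).2‖ ^ 2) :=
          intervalIntegral.integral_nonneg hab (fun τ _ => by positivity)
        have hi2 : (0:ℝ) ≤ ∫ τ in (t - T)..t,
            (‖(c • (p e.2 e.1 τ - σ • rbar e.2 e.1 τ)).1‖ ^ 2
              + ‖(c • (p e.2 e.1 τ - σ • rbar e.2 e.1 τ)).2‖ ^ 2) :=
          intervalIntegral.integral_nonneg hab (fun τ _ => by positivity)
        positivity
      have h1 : (1 / (m:ℝ)) * (1 / 2 * ‖q i t - qr‖ ^ 2 + 1 / 2 * ‖ξ i t‖ ^ 2)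
          ≤ (1 / (m:ℝ)) * ∑ i', (1 / 2 * ‖q i' t - qr‖ ^ 2 + 1 / 2 * ‖ξ i' t‖ ^ 2) :=
        mul_le_mul_of_nonneg_left hle (by positivity)
      linarith
    have hqb : ‖q i t - qr‖ ^ 2 ≤ 2 * m * (S 0 + Sh 0) := by
      have h4 := hrest.trans hSt
      have h5 : 1 / 2 * ‖q i t - qr‖ ^ 2 + 1 / 2 * ‖ξ i t‖ ^ 2 ≤ (m:ℝ) * (S 0 + Sh 0) := by
        rw [div_mul_eq_mul_div, one_mul, div_le_iff₀ hm0] at h4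
        linarith [h4]
      nlinarith [sq_nonneg (‖ξ i t‖)]
    have hξb : ‖ξ i t‖ ^ 2 ≤ 2 * m * (S 0 + Sh 0) := by
      have h4 := hrest.trans hSt
      have h5 : 1 / 2 * ‖q i t - qr‖ ^ 2 + 1 / 2 * ‖ξ i t‖ ^ 2 ≤ (m:ℝ) * (S 0 + Sh 0) := by
        rw [div_mul_eq_mul_div, one_mul, div_le_iff₀ hm0] at h4
        linarith [h4]
      nlinarith [sq_nonneg (‖q i t - qr‖)]
    constructor
    · rw [← Real.sqrt_sq (norm_nonneg (q i t - qr))]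
      exact Real.sqrt_le_sqrt hqb
    · rw [← Real.sqrt_sq (norm_nonneg (ξ i t))]
      exact Real.sqrt_le_sqrt hξb
  · -- integral bound
    have hVd : ∀ s, HasDerivAt (fun s' => U s' + ∫ τ in (0:ℝ)..s', W τ)
        (((-((1 / (m:ℝ)) * ∑ i, ∑ j, a i j * ‖q i s - rq i j s‖ ^ 2) + ⟪z s - qr, uh s⟫)
          + deriv Sh s) + W s) s := by
      intro s
      refine (hUd s).add ?_
      exact intervalIntegral.integral_hasDerivAt_right (hWc.intervalIntegrable _ _)
        (hWc.stronglyMeasurableAtFilter _ _) hWc.continuousAt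
    have hVmono : Antitone (fun s' => U s' + ∫ τ in (0:ℝ)..s', W τ) := by
      refine antitone_of_deriv_nonpos (fun s => (hVd s).differentiableAt) (fun s => ?_)
      rw [(hVd s).deriv]
      have h6 := hderivU s
      rw [(hUd s).deriv] at h6
      linarith
    have h7 := hVmono ht
    simp only [intervalIntegral.integral_same, add_zero] at h7
    have h8 : (∫ τ in (0:ℝ)..t, W τ) ≤ U 0 - U t := by linarith
    have h9 : (∫ τ in (0:ℝ)..t, W τ) ≤ S 0 + Sh 0 := by
      have := hU0 t
      rw [hU 0] at h8
      linarith
    rw [hWdef] at h9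
    exact h9
end

section
/- Consider an edge (i,j) of the communication graph with common gains a ≥ 0, b, parameters σ > 0, T > 0, differentiable q_i, ξ_i, q_j, ξ_j : ℝ → ℝ² and continuous r^q_{ij}, r^ξ_{ij}, r^q_{ji}, r^ξ_{ji} : ℝ → ℝ² satisfying the scattering transmission relations s⁻_{ij}(t) = s⁻_{ji}(t−T) and s⁺_{ji}(t) = s⁺_{ij}(t−T) (with p_{ij} = M_{ij}(r_{ij} − (q_i, ξ_i)), M_{ij}(x₁,x₂) = (a x₁ − b x₂, b x₁), and analogously for p_{ji}), and the controller dynamics ξ̇_i(t) = Σ_{k∈N_i} b_{ik}(r^q_{ik}(t) − q_i(t)) over the finite neighbor set N_i of i. Assume that r^q_{ik}(t) − q_i(t) → 0 as t → ∞ for every k ∈ N_i and r^q_{ji}(t) − q_j(t) → 0 as t → ∞. Then the defect signals e_{ij}(t) = −(1/σ)[(r^q_{ij}(t)−q_i(t)) + (r^q_{ji}(t−T)−q_j(t−T))] and e_{ji}(t) = −(1/σ)[(r^q_{ji}(t)−q_j(t)) + (r^q_{ij}(t−T)−q_i(t−T))] tend to 0, and moreover r^q_{ij}(t) + r^q_{ij}(t−2T)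 − 2·r^q_{ji}(t−T) → 0 as t → ∞. -/
open Filter

/-- If `f` has derivative `g` everywhere and `g → 0` at `atTop`, then
`f (t - c) - f t → 0` for a fixed shift `c > 0`. -/
lemma tendsto_shift_sub_of_hasDerivAt {E : Type*} [NormedAddCommGroup E] [NormedSpace ℝ E]
    {f g : ℝ → E} {c : ℝ} (hc : 0 < c)
    (hf : ∀ t, HasDerivAt f (g t) t) (hg : Tendsto g atTop (nhds 0)) :
    Tendsto (fun t => f (t - c) - f t) atTop (nhds 0) := by
  rw [Metric.tendsto_atTop] at hg ⊢
  intro ε hε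
  obtain ⟨M, hM⟩ := hg (ε / (c + 1)) (by positivity)
  refine ⟨M + c, fun t ht => ?_⟩
  have h1 : t - c ≤ t := by linarith
  have key := norm_image_sub_le_of_norm_deriv_le_segment'
    (f := f) (f' := g) (a := t - c) (b := t) (C := ε / (c + 1))
    (fun x _ => (hf x).hasDerivWithinAt)
    (fun x hx => by
      have : M ≤ x := by
        rcases hx with ⟨hx1, _⟩
        linarith
      have := hM x this
      rw [dist_zero_right] at this
      linarith)
    t (by constructor <;> linarith)
  rw [dist_zero_right, norm_sub_rev]
  have : ε / (c + 1) * (t - (t - c)) < ε := by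
    have : t - (t - c) = c := by ring
    rw [this]
    rw [div_mul_eq_mul_div, div_lt_iff₀ (by positivity)]
    nlinarith
  linarith

/-- On an edge `(i,j)` of the communication graph with scattering
transmission relations `s⁻_{ij}(t) = s⁻_{ji}(t−T)` and `s⁺_{ji}(t) = s⁺_{ij}(t−T)` and the
controller dynamics `ξ̇ᵢ = Σ_{k∈Nᵢ} b_{ik}(r^q_{ik} − qᵢ)`, if `r^q_{ik} − qᵢ → 0` for all
`k ∈ Nᵢ` and `r^q_{ji} − qⱼ → 0`, then the defect signals `e_{ij}, e_{ji}` tend to `0` and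
`r^q_{ij}(t) + r^q_{ij}(t−2T) − 2r^q_{ji}(t−T) → 0` as `t → ∞`. -/
theorem stmt_12 {ι : Type*} (N : Finset ι) (j : ι) (hj : j ∈ N)
    (a b : ℝ) (ha : 0 ≤ a) (bgain : ι → ℝ) (hbj : bgain j = b)
    (σ T : ℝ) (hσ : 0 < σ) (hT : 0 < T)
    (qi ξi qj ξj : ℝ → EuclideanSpace ℝ (Fin 2))
    (hqi : Differentiable ℝ qi) (hqj : Differentiable ℝ qj) (hξj : Differentiable ℝ ξj)
    -- signals received by robot `i` from its neighbors (`r^q_{ij} = rq' j`, `r^ξ_{ij} = rξ' j`)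
    (rq' rξ' : ι → ℝ → EuclideanSpace ℝ (Fin 2))
    (hrq' : ∀ k, Continuous (rq' k)) (hrξ' : ∀ k, Continuous (rξ' k))
    -- signals received by robot `j` from robot `i`
    (rqji rξji : ℝ → EuclideanSpace ℝ (Fin 2))
    (hrqji : Continuous rqji) (hrξji : Continuous rξji)
    -- `p_{ij} = M_{ij}(r_{ij} − (qᵢ, ξᵢ))`, `M_{ij}(x₁,x₂) = (a x₁ − b x₂, b x₁)`, and likewise `p_{ji}`
    (pij pji : ℝ → EuclideanSpace ℝ (Fin 2) × EuclideanSpace ℝ (Fin 2))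
    (hpij : ∀ t, pij t
      = (a • (rq' j t - qi t) - b • (rξ' j t - ξi t), b • (rq' j t - qi t)))
    (hpji : ∀ t, pji t
      = (a • (rqji t - qj t) - b • (rξji t - ξj t), b • (rqji t - qj t)))
    -- scattering transmission relations: `s⁻_{ij}(t) = s⁻_{ji}(t−T)`, `s⁺_{ji}(t) = s⁺_{ij}(t−T)`
    (htransm : ∀ t : ℝ,
      (1 / Real.sqrt (2 * σ)) • (-pij t - σ • ((rq' j t, rξ' j t) :
          EuclideanSpace ℝ (Fin 2) × EuclideanSpace ℝ (Fin 2)))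
        = (1 / Real.sqrt (2 * σ)) • (pji (t - T) - σ • ((rqji (t - T), rξji (t - T)) :
            EuclideanSpace ℝ (Fin 2) × EuclideanSpace ℝ (Fin 2))))
    (htransp : ∀ t : ℝ,
      (1 / Real.sqrt (2 * σ)) • (pji t + σ • ((rqji t, rξji t) :
          EuclideanSpace ℝ (Fin 2) × EuclideanSpace ℝ (Fin 2)))
        = (1 / Real.sqrt (2 * σ)) • (-pij (t - T) + σ • ((rq' j (t - T), rξ' j (t - T)) :
            EuclideanSpace ℝ (Fin 2) × EuclideanSpace ℝ (Fin 2))))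
    -- controller dynamics of robot `i`
    (hξdyn : ∀ t, HasDerivAt ξi (∑ k ∈ N, bgain k • (rq' k t - qi t)) t)
    -- convergence of the received positions
    (hconv : ∀ k ∈ N, Tendsto (fun t => rq' k t - qi t) atTop (nhds 0))
    (hconvj : Tendsto (fun t => rqji t - qj t) atTop (nhds 0))
    -- the defect signals
    (eij eji : ℝ → EuclideanSpace ℝ (Fin 2))
    (heij : ∀ t, eij t
      = -(1 / σ) • ((rq' j t - qi t) + (rqji (t - T) - qj (t - T))))
    (heji : ∀ t, eji t
      = -(1 / σ) • ((rqji t - qj t) + (rq' j (t - T) - qi (t - T)))) :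
    Tendsto eij atTop (nhds 0) ∧ Tendsto eji atTop (nhds 0) ∧
    Tendsto (fun t => rq' j t + rq' j (t - 2 * T) - (2 : ℝ) • rqji (t - T))
      atTop (nhds 0) := by
  -- shifted-time limits
  have hshift : ∀ c : ℝ, Tendsto (fun t : ℝ => t - c) atTop atTop :=
    fun c => (tendsto_atTop_add_const_right atTop (-c) tendsto_id).congr
      (fun t => (sub_eq_add_neg t c).symm)
  have hu : Tendsto (fun t => rq' j t - qi t) atTop (nhds 0) := hconv j hj
  have huT : ∀ c : ℝ, Tendsto (fun t => rq' j (t - c) - qi (t - c)) atTop (nhds 0) :=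
    fun c => hu.comp (hshift c)
  have hwT : ∀ c : ℝ, Tendsto (fun t => rqji (t - c) - qj (t - c)) atTop (nhds 0) :=
    fun c => hconvj.comp (hshift c)
  -- the defect signals tend to zero
  have h1 : Tendsto eij atTop (nhds 0) := by
    have := ((hu.add (hwT T)).const_smul (-(1 / σ)))
    simpa [heij] using (funext heij ▸ (by simpa using this :
      Tendsto (fun t => -(1/σ) • ((rq' j t - qi t) + (rqji (t - T) - qj (t - T))))
        atTop (nhds 0)))
  have h2 : Tendsto eji atTop (nhds 0) := by
    have := ((hconvj.add (huT T)).const_smul (-(1 / σ)))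
    simpa [heji] using (funext heji ▸ (by simpa using this :
      Tendsto (fun t => -(1/σ) • ((rqji t - qj t) + (rq' j (t - T) - qi (t - T))))
        atTop (nhds 0)))
  refine ⟨h1, h2, ?_⟩
  -- extract the scattering equations, component-wise
  have hc : (1 / Real.sqrt (2 * σ)) ≠ 0 :=
    one_div_ne_zero (ne_of_gt (Real.sqrt_pos.mpr (by linarith)))
  have hm : ∀ t : ℝ, -pij t - σ • ((rq' j t, rξ' j t) :
      EuclideanSpace ℝ (Fin 2) × EuclideanSpace ℝ (Fin 2))
        = pji (t - T) - σ • ((rqji (t - T), rξji (t - T)) :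
        EuclideanSpace ℝ (Fin 2) × EuclideanSpace ℝ (Fin 2)) :=
    fun t => smul_right_injective _ hc (htransm t)
  have hp : ∀ t : ℝ, pji t + σ • ((rqji t, rξji t) :
      EuclideanSpace ℝ (Fin 2) × EuclideanSpace ℝ (Fin 2))
        = -pij (t - T) + σ • ((rq' j (t - T), rξ' j (t - T)) :
        EuclideanSpace ℝ (Fin 2) × EuclideanSpace ℝ (Fin 2)) :=
    fun t => smul_right_injective _ hc (htransp t)
  have A1 : ∀ t : ℝ, -(a • (rq' j t - qi t) - b • (rξ' j t - ξi t)) - σ • rq' j t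
      = (a • (rqji (t - T) - qj (t - T)) - b • (rξji (t - T) - ξj (t - T)))
        - σ • rqji (t - T) := by
    intro t
    have := congrArg Prod.fst (hm t)
    simpa [hpij, hpji, Prod.smul_mk, Prod.neg_mk, Prod.mk_sub_mk, Prod.mk_add_mk, Prod.mk.injEq] using this
  have A2 : ∀ t : ℝ, -(b • (rq' j t - qi t)) - σ • rξ' j t
      = b • (rqji (t - T) - qj (t - T)) - σ • rξji (t - T) := by
    intro t
    have := congrArg Prod.snd (hm t)
    simpa [hpij, hpji, Prod.smul_mk, Prod.neg_mk, Prod.mk_sub_mk, Prod.mk_add_mk, Prod.mk.injEq] using this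
  have B1 : ∀ t : ℝ, (a • (rqji t - qj t) - b • (rξji t - ξj t)) + σ • rqji t
      = -(a • (rq' j (t - T) - qi (t - T)) - b • (rξ' j (t - T) - ξi (t - T)))
        + σ • rq' j (t - T) := by
    intro t
    have := congrArg Prod.fst (hp t)
    simpa [hpij, hpji, Prod.smul_mk, Prod.neg_mk, Prod.mk_sub_mk, Prod.mk_add_mk, Prod.mk.injEq] using this
  have B2 : ∀ t : ℝ, b • (rqji t - qj t) + σ • rξji t
      = -(b • (rq' j (t - T) - qi (t - T))) + σ • rξ' j (t - T) := by
    intro t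
    have := congrArg Prod.snd (hp t)
    simpa [hpij, hpji, Prod.smul_mk, Prod.neg_mk, Prod.mk_sub_mk, Prod.mk_add_mk, Prod.mk.injEq] using this
  have h2T : ∀ t : ℝ, t - T - T = t - 2 * T := fun t => by ring
  -- key identity for the ξ channel
  have hR : ∀ t : ℝ, σ • (rξ' j (t - 2 * T) - rξ' j t)
      = b • (rq' j t - qi t) + b • (rq' j (t - 2 * T) - qi (t - 2 * T))
        + (2 * b) • (rqji (t - T) - qj (t - T)) := by
    intro t
    have e1 := A2 t
    have e2 := B2 (t - T)
    rw [h2T] at e2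
    linear_combination (norm := module) e1 - e2
  -- key identity for the q channel
  have hG : ∀ t : ℝ, σ • (rq' j t + rq' j (t - 2 * T) - (2 : ℝ) • rqji (t - T))
      = (a • (rq' j (t - 2 * T) - qi (t - 2 * T)) - b • (rξ' j (t - 2 * T) - ξi (t - 2 * T)))
        - (a • (rq' j t - qi t) - b • (rξ' j t - ξi t)) := by
    intro t
    have e1 := A1 t
    have e2 := B1 (t - T)
    rw [h2T] at e2
    linear_combination (norm := module) -e1 - e2
  -- the ξᵢ increment tends to zero
  have hξi : Tendsto (fun t => ξi (t - 2 * T) - ξi t) atTop (nhds 0) := by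
    apply tendsto_shift_sub_of_hasDerivAt (by linarith) hξdyn
    have : Tendsto (fun t => ∑ k ∈ N, bgain k • (rq' k t - qi t)) atTop
        (nhds (∑ k ∈ N, (0 : EuclideanSpace ℝ (Fin 2)))) :=
      tendsto_finset_sum _ (fun k hk => by
        simpa using (hconv k hk).const_smul (bgain k))
    simpa using this
  -- rξ' increment tends to zero
  have hRlim : Tendsto (fun t => rξ' j (t - 2 * T) - rξ' j t) atTop (nhds 0) := by
    have hlim : Tendsto (fun t => σ⁻¹ • (b • (rq' j t - qi t)
        + b • (rq' j (t - 2 * T) - qi (t - 2 * T))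
        + (2 * b) • (rqji (t - T) - qj (t - T)))) atTop (nhds 0) := by
      have := (((hu.const_smul b).add ((huT (2 * T)).const_smul b)).add
        ((hwT T).const_smul (2 * b))).const_smul σ⁻¹
      simpa using this
    refine hlim.congr (fun t => ?_)
    rw [← hR t, smul_smul, inv_mul_cancel₀ (ne_of_gt hσ), one_smul]
  -- conclude
  have hσG : Tendsto (fun t => σ • (rq' j t + rq' j (t - 2 * T) - (2 : ℝ) • rqji (t - T)))
      atTop (nhds 0) := by
    have hlim : Tendsto (fun t => a • ((rq' j (t - 2 * T) - qi (t - 2 * T)) - (rq' j t - qi t))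
        - b • (rξ' j (t - 2 * T) - rξ' j t) + b • (ξi (t - 2 * T) - ξi t)) atTop (nhds 0) := by
      have := ((((huT (2 * T)).sub hu).const_smul a).sub (hRlim.const_smul b)).add
        (hξi.const_smul b)
      simpa using this
    refine hlim.congr (fun t => ?_)
    rw [hG t]
    module
  have := hσG.const_smul σ⁻¹
  simp only [smul_smul, inv_mul_cancel₀ (ne_of_gt hσ), one_smul, smul_zero] at this
  exact this
end
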